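/- arXiv:1407.8534 — 10 statements merged into one kernel-verified Lean document; each statement's English description precedes it below -/
import Mathlib

section
/- For any ℓ ≥ 1 and distinct complex numbers z_1,…,z_ℓ, the symmetrization identity ∑_{ω ∈ S(ℓ)} ∏_{1 ≤ B < A ≤ ℓ} (z_{ω(A)} - q z_{ω(B)})/(z_{ω(A)} - z_{ω(B)}) = (q;q)_ℓ / (1-q)^ℓ holds, where (q;q)_ℓ = ∏_{j=1}^ℓ (1 - q^j). -/
open Finset

open Polynomial in
lemma lagrange_coeff {m : ℕ} (z : Fin (m+1) → ℂ) (hz : Function.Injective z)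
    (f : ℂ[X]) (hf : f.degree < (m+1 : ℕ)) :
    f.coeff m = ∑ k : Fin (m+1), f.eval (z k) * (∏ j ∈ Finset.univ.erase k, (z k - z j))⁻¹ := by
  have hcard : (Finset.univ : Finset (Fin (m+1))).card = m + 1 := by simp
  have h := Lagrange.eq_interpolate (v := z) (s := Finset.univ) hz.injOn (by rwa [hcard])
  conv_lhs => rw [h]
  rw [Lagrange.interpolate_apply, Polynomial.finset_sum_coeff]
  refine Finset.sum_congr rfl fun k _ => ?_
  rw [Polynomial.coeff_C_mul]
  congr 1
  have hb : (Lagrange.basis Finset.univ z k).natDegree = m := by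
    rw [Lagrange.natDegree_basis hz.injOn (Finset.mem_univ k), hcard]; rfl
  have : (Lagrange.basis Finset.univ z k).coeff m = (Lagrange.basis Finset.univ z k).leadingCoeff := by
    rw [Polynomial.leadingCoeff, hb]
  rw [this, Lagrange.basis, Polynomial.leadingCoeff_prod, ← Finset.prod_inv_distrib]
  refine Finset.prod_congr rfl fun j hj => ?_
  have hne : z k ≠ z j := fun hzz => (Finset.mem_erase.mp hj).1 (hz hzz).symm
  rw [Lagrange.basisDivisor, Polynomial.leadingCoeff_mul, Polynomial.leadingCoeff_C,
    Polynomial.leadingCoeff_X_sub_C, mul_one]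

open Polynomial in
lemma key_sum {m : ℕ} (q : ℂ) (hq : q ≠ 1) (z : Fin (m+1) → ℂ) (hz : Function.Injective z) :
    ∑ k : Fin (m+1), ∏ i ∈ Finset.univ.erase k, (z i - q * z k) / (z i - z k)
      = (1 - q ^ (m+1)) / (1 - q) := by
  classical
  set W : ℂ[X] := ∏ i : Fin (m+1), (X - C (z i)) with hW
  have hWmonic : W.Monic := monic_prod_of_monic _ _ fun i _ => monic_X_sub_C (z i)
  have hWdeg : W.natDegree = m + 1 := by
    rw [hW, natDegree_prod _ _ fun i _ => X_sub_C_ne_zero (z i)]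
    simp
  set g : ℂ[X] := ∑ j ∈ Finset.range (m+1),
      C (W.coeff (j+1) * (∑ i ∈ Finset.range (j+1), q^i)) * X^j with hg
  have hkey : ∀ t : ℂ, (q - 1) * t * g.eval t = W.eval (q * t) - W.eval t := by
    intro t
    have h1 : W.eval (q * t) = ∑ j ∈ Finset.range (m+2), W.coeff j * (q * t)^j :=
      eval_eq_sum_range' (by omega) _
    have h2 : W.eval t = ∑ j ∈ Finset.range (m+2), W.coeff j * t^j :=
      eval_eq_sum_range' (by omega) _
    have h3 : g.eval t = ∑ j ∈ Finset.range (m+1),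
        W.coeff (j+1) * (∑ i ∈ Finset.range (j+1), q^i) * t^j := by
      rw [hg, eval_finset_sum]
      refine Finset.sum_congr rfl fun j _ => ?_
      rw [eval_mul, eval_C, eval_pow, eval_X]
    rw [h1, h2, h3, ← Finset.sum_sub_distrib]
    conv_rhs => rw [Finset.sum_range_succ']
    have h0 : W.coeff 0 * (q * t)^0 - W.coeff 0 * t^0 = 0 := by ring
    rw [h0, add_zero, Finset.mul_sum]
    refine Finset.sum_congr rfl fun j _ => ?_
    have hgeom : (q - 1) * (∑ i ∈ Finset.range (j+1), q^i) = q^(j+1) - 1 := by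
      rw [mul_comm]; exact geom_sum_mul q (j+1)
    calc (q - 1) * t * (W.coeff (j+1) * (∑ i ∈ Finset.range (j+1), q^i) * t^j)
        = W.coeff (j+1) * ((q-1) * (∑ i ∈ Finset.range (j+1), q^i)) * t^(j+1) := by ring
      _ = W.coeff (j+1) * (q^(j+1) - 1) * t^(j+1) := by rw [hgeom]
      _ = W.coeff (j+1) * (q*t)^(j+1) - W.coeff (j+1) * t^(j+1) := by
          rw [mul_pow]; ring
  have hnode : ∀ k, g.eval (z k) = ∏ i ∈ Finset.univ.erase k, (q * z k - z i) := by
    intro k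
    have hWzk : W.eval (z k) = 0 := by
      rw [hW, eval_prod]
      exact Finset.prod_eq_zero (Finset.mem_univ k) (by simp)
    by_cases hzk : z k = 0
    · have hg0 : g.eval (z k) = W.coeff 1 := by
        rw [hzk, hg, eval_finset_sum]
        rw [Finset.sum_eq_single 0]
        · simp
        · intro j _ hj; simp [zero_pow hj]
        · simp
      have hWsplit : W = (X - C (z k)) * ∏ i ∈ Finset.univ.erase k, (X - C (z i)) :=
        (Finset.mul_prod_erase _ _ (Finset.mem_univ k)).symm
      have hX : W = X * ∏ i ∈ Finset.univ.erase k, (X - C (z i)) := by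
        rw [hWsplit, hzk]; simp
      rw [hg0, hX, coeff_X_mul, coeff_zero_eq_eval_zero, eval_prod]
      simp only [eval_sub, eval_X, eval_C]
      refine Finset.prod_congr rfl fun i _ => ?_
      rw [hzk]; ring
    · have h := hkey (z k)
      have hWq : W.eval (q * z k) = ((q - 1) * z k) * ∏ i ∈ Finset.univ.erase k, (q * z k - z i) := by
        rw [hW, eval_prod]
        simp only [eval_sub, eval_X, eval_C]
        rw [← Finset.mul_prod_erase _ _ (Finset.mem_univ k)]
        ring_nf
      rw [hWzk, sub_zero, hWq] at h
      exact mul_left_cancel₀ (mul_ne_zero (sub_ne_zero.mpr hq) hzk) h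
  have hgdeg : g.degree < (m+1 : ℕ) := by
    rw [hg]
    refine lt_of_le_of_lt (degree_sum_le _ _) ?_
    rw [Finset.sup_lt_iff (by exact_mod_cast WithBot.bot_lt_coe (m+1))]
    intro j hj
    refine lt_of_le_of_lt (degree_C_mul_X_pow_le _ _) ?_
    exact_mod_cast Nat.cast_lt.mpr (Finset.mem_range.mp hj)
  have hgcoeff : g.coeff m = ∑ i ∈ Finset.range (m+1), q^i := by
    rw [hg, finset_sum_coeff]
    rw [Finset.sum_eq_single m]
    · rw [coeff_C_mul, coeff_X_pow, if_pos rfl, mul_one]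
      have h1 : W.coeff (m+1) = 1 := by
        have := hWmonic.leadingCoeff
        rwa [Polynomial.leadingCoeff, hWdeg] at this
      rw [h1, one_mul]
    · intro j _ hj
      rw [coeff_C_mul, coeff_X_pow, if_neg (fun h => hj h.symm), mul_zero]
    · intro h; exact absurd (Finset.self_mem_range_succ m) h
  have hLag := lagrange_coeff z hz g hgdeg
  rw [hgcoeff] at hLag
  have hterm : ∀ k : Fin (m+1), ∏ i ∈ Finset.univ.erase k, (z i - q * z k) / (z i - z k)
      = g.eval (z k) * (∏ j ∈ Finset.univ.erase k, (z k - z j))⁻¹ := by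
    intro k
    calc ∏ i ∈ Finset.univ.erase k, (z i - q * z k) / (z i - z k)
        = ∏ i ∈ Finset.univ.erase k, (q * z k - z i) / (z k - z i) := by
          refine Finset.prod_congr rfl fun i _ => ?_
          rw [show q * z k - z i = -(z i - q * z k) by ring,
            show z k - z i = -(z i - z k) by ring, neg_div_neg_eq]
      _ = (∏ i ∈ Finset.univ.erase k, (q * z k - z i)) / ∏ i ∈ Finset.univ.erase k, (z k - z i) :=
          Finset.prod_div_distrib _ _
      _ = g.eval (z k) * (∏ j ∈ Finset.univ.erase k, (z k - z j))⁻¹ := by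
          rw [hnode k, div_eq_mul_inv]
  rw [Finset.sum_congr rfl fun k _ => hterm k, ← hLag]
  rw [geom_sum_eq hq]
  rw [div_eq_div_iff (sub_ne_zero.mpr hq) (sub_ne_zero.mpr (Ne.symm hq))]
  ring

lemma triangle_succ {n : ℕ} (F : Fin (n+1) → Fin (n+1) → ℂ) :
    ∏ p ∈ Finset.univ.filter (fun p : Fin (n+1) × Fin (n+1) => p.1 < p.2), F p.1 p.2
      = (∏ j : Fin n, F 0 j.succ) *
        ∏ p ∈ Finset.univ.filter (fun p : Fin n × Fin n => p.1 < p.2), F p.1.succ p.2.succ := by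
  rw [Finset.prod_filter, Finset.prod_filter, Fintype.prod_prod_type, Fintype.prod_prod_type]
  rw [Fin.prod_univ_succ]
  congr 1
  · rw [Fin.prod_univ_succ]
    simp [Fin.succ_pos]
  · have : ∀ a : Fin n, (∏ b : Fin (n+1), if a.succ < b then F a.succ b else 1)
        = ∏ b : Fin n, if a < b then F a.succ b.succ else 1 := by
      intro a
      rw [Fin.prod_univ_succ]
      simp [Fin.succ_lt_succ_iff]
    simp_rw [this]

lemma main_aux : ∀ (ℓ : ℕ) (q : ℂ), q ≠ 1 → ∀ (z : Fin ℓ → ℂ), Function.Injective z →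
    ∑ ω : Equiv.Perm (Fin ℓ),
      ∏ p ∈ Finset.univ.filter (fun p : Fin ℓ × Fin ℓ => p.1 < p.2),
        (z (ω p.2) - q * z (ω p.1)) / (z (ω p.2) - z (ω p.1))
      = (∏ j ∈ Finset.range ℓ, (1 - q ^ (j + 1))) / (1 - q) ^ ℓ := by
  intro ℓ
  induction ℓ with
  | zero =>
    intro q hq z hz
    simp
  | succ n IH =>
    intro q hq z hz
    have hy : ∀ k : Fin (n+1), Function.Injective (fun i : Fin n => z (Equiv.swap 0 k i.succ)) :=
      fun k => hz.comp ((Equiv.swap 0 k).injective.comp (Fin.succ_injective n))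
    have hstep : ∀ (k : Fin (n+1)) (σ : Equiv.Perm (Fin n)),
        (∏ p ∈ Finset.univ.filter (fun p : Fin (n+1) × Fin (n+1) => p.1 < p.2),
          (z (Equiv.Perm.decomposeFin.symm (k, σ) p.2) - q * z (Equiv.Perm.decomposeFin.symm (k, σ) p.1))
            / (z (Equiv.Perm.decomposeFin.symm (k, σ) p.2) - z (Equiv.Perm.decomposeFin.symm (k, σ) p.1)))
        = (∏ i ∈ Finset.univ.erase k, (z i - q * z k) / (z i - z k)) *
          ∏ p ∈ Finset.univ.filter (fun p : Fin n × Fin n => p.1 < p.2),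
            ((fun i => z (Equiv.swap 0 k i.succ)) (σ p.2) - q * (fun i => z (Equiv.swap 0 k i.succ)) (σ p.1))
              / ((fun i => z (Equiv.swap 0 k i.succ)) (σ p.2) - (fun i => z (Equiv.swap 0 k i.succ)) (σ p.1)) := by
      intro k σ
      rw [triangle_succ (fun a b => (z (Equiv.Perm.decomposeFin.symm (k, σ) b) - q * z (Equiv.Perm.decomposeFin.symm (k, σ) a))
            / (z (Equiv.Perm.decomposeFin.symm (k, σ) b) - z (Equiv.Perm.decomposeFin.symm (k, σ) a)))]
      congr 1
      · -- first factor
        simp only [Equiv.Perm.decomposeFin_symm_apply_zero, Equiv.Perm.decomposeFin_symm_apply_succ]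
        rw [Equiv.prod_comp σ (fun i => (z (Equiv.swap 0 k i.succ) - q * z k) / (z (Equiv.swap 0 k i.succ) - z k))]
        refine Finset.prod_bij (fun (j : Fin n) _ => Equiv.swap 0 k j.succ) ?_ ?_ ?_ ?_
        · intro j _
          refine Finset.mem_erase.mpr ⟨?_, Finset.mem_univ _⟩
          intro h
          have h2 := congrArg (Equiv.swap 0 k) h
          rw [Equiv.swap_apply_self, Equiv.swap_apply_right] at h2
          exact Fin.succ_ne_zero j h2
        · intro a _ b _ h
          exact Fin.succ_injective _ ((Equiv.swap 0 k).injective h)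
        · intro b hb
          have hbk : b ≠ k := (Finset.mem_erase.mp hb).1
          have h0 : Equiv.swap 0 k b ≠ 0 := by
            intro h
            apply hbk
            have h2 := congrArg (Equiv.swap 0 k) h
            rwa [Equiv.swap_apply_self, Equiv.swap_apply_left] at h2
          refine ⟨(Equiv.swap 0 k b).pred h0, Finset.mem_univ _, ?_⟩
          rw [Fin.succ_pred, Equiv.swap_apply_self]
        · intro j _
          rfl
      · refine Finset.prod_congr rfl fun p _ => ?_
        simp only [Equiv.Perm.decomposeFin_symm_apply_succ]
    rw [← Equiv.sum_comp (Equiv.Perm.decomposeFin).symm, Fintype.sum_prod_type]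
    refine Eq.trans (Finset.sum_congr rfl fun k _ =>
      Eq.trans (Finset.sum_congr rfl fun σ _ => hstep k σ)
        (by rw [← Finset.mul_sum, IH q hq _ (hy k)])) ?_
    have h1q : (1:ℂ) - q ≠ 0 := sub_ne_zero.mpr (Ne.symm hq)
    rw [← Finset.sum_mul, key_sum q hq z hz, Finset.prod_range_succ, div_mul_div_comm, pow_succ]
    ring

/-- The symmetrization identity
`∑_{ω ∈ S(ℓ)} ∏_{B<A} (z_{ω(A)} - q z_{ω(B)})/(z_{ω(A)} - z_{ω(B)}) = (q;q)_ℓ/(1-q)^ℓ`. -/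
theorem stmt1 (ℓ : ℕ) (hℓ : 1 ≤ ℓ) (q : ℂ) (hq : q ≠ 1)
    (z : Fin ℓ → ℂ) (hz : Function.Injective z) :
    ∑ ω : Equiv.Perm (Fin ℓ),
      ∏ p ∈ Finset.univ.filter (fun p : Fin ℓ × Fin ℓ => p.1 < p.2),
        (z (ω p.2) - q * z (ω p.1)) / (z (ω p.2) - z (ω p.1))
      = (∏ j ∈ Finset.range ℓ, (1 - q ^ (j + 1))) / (1 - q) ^ ℓ :=
  main_aux ℓ q hq z hz
end

section
/- For all integers m ≥ 0 and parameters 0 < q < 1, 0 ≤ ν ≤ μ < 1, the deformed binomial weights sum to one: ∑_{j=0}^m φ_{q,μ,ν}(j | m) = 1, where φ_{q,μ,ν}(j | m) = μ^j · (ν/μ;q)_j (μ;q)_{m-j} / (ν;q)_m · (q;q)_m / ((q;q)_j (q;q)_{m-j}). -/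
open Finset

private def Pp (q : ℝ) (n : ℕ) : ℝ := ∏ i ∈ Finset.range n, (1 - q ^ (i + 1))

private lemma Pp_pos {q : ℝ} (hq0 : 0 < q) (hq1 : q < 1) (n : ℕ) : 0 < Pp q n :=
  Finset.prod_pos fun i _ => by
    have h : q ^ (i + 1) < 1 := pow_lt_one₀ hq0.le hq1 (Nat.succ_ne_zero i)
    linarith

private lemma Pp_succ (q : ℝ) (n : ℕ) :
    Pp q (n + 1) = Pp q n * (1 - q ^ (n + 1)) := by
  simp [Pp, Finset.prod_range_succ]

private lemma pascal_aux (P K L x y : ℝ) (hK : K ≠ 0) (hL : L ≠ 0)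
    (hx : 1 - x ≠ 0) (hy : 1 - y ≠ 0) :
    P * (1 - y * x) / (K * (1 - x) * (L * (1 - y)))
      = P / (K * (1 - x) * L) + y * (P / (K * (L * (1 - y)))) := by
  field_simp
  ring

private lemma key (q μ ν : ℝ) (hq0 : 0 < q) (hq1 : q < 1) (m : ℕ) :
    ∑ j ∈ Finset.range (m + 1),
      (∏ i ∈ Finset.range j, (μ - ν * q ^ i)) *
      (∏ i ∈ Finset.range (m - j), (1 - μ * q ^ i)) *
      (Pp q m / (Pp q j * Pp q (m - j)))
    = ∏ i ∈ Finset.range m, (1 - ν * q ^ i) := by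
  have hP : ∀ n, (0:ℝ) < Pp q n := Pp_pos hq0 hq1
  have hPne : ∀ n, Pp q n ≠ 0 := fun n => (hP n).ne'
  have hqne : ∀ n : ℕ, (1 - q ^ (n + 1)) ≠ 0 := fun n => by
    have h : q ^ (n + 1) < 1 := pow_lt_one₀ hq0.le hq1 (Nat.succ_ne_zero n)
    intro h0; linarith
  induction m with
  | zero => simp [Pp]
  | succ m ih =>
    set A : ℕ → ℝ := fun j => ∏ i ∈ Finset.range j, (μ - ν * q ^ i) with hA
    set B : ℕ → ℝ := fun k => ∏ i ∈ Finset.range k, (1 - μ * q ^ i) with hB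
    have hA0 : A 0 = 1 := by simp [hA]
    have hB0 : B 0 = 1 := by simp [hB]
    have hP0 : Pp q 0 = 1 := by simp [Pp]
    have hAsucc : ∀ j, A (j + 1) = A j * (μ - ν * q ^ j) := fun j => by
      simp [hA, Finset.prod_range_succ]
    have hBsucc : ∀ k, B (k + 1) = B k * (1 - μ * q ^ k) := fun k => by
      simp [hB, Finset.prod_range_succ]
    set c : ℕ → ℝ := fun j =>
      A j * B (m + 1 - j) * (Pp q (m + 1) / (Pp q j * Pp q (m + 1 - j))) with hc
    set dd : ℕ → ℝ := fun j => if j = m + 1 then 0 else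
      A j * B (m + 1 - j) * (Pp q m / (Pp q j * Pp q (m - j))) with hdd
    set ee : ℕ → ℝ := fun j => if j = 0 then 0 else
      A j * B (m + 1 - j) * q ^ (m + 1 - j) *
        (Pp q m / (Pp q (j - 1) * Pp q (m - (j - 1)))) with hee
    have hsplit : ∀ j ∈ Finset.range (m + 2), c j = dd j + ee j := by
      intro j hj
      rcases Nat.eq_zero_or_pos j with rfl | hj1
      · -- j = 0
        have e1 : c 0 = B (m + 1) := by
          simp only [hc, hA0, hP0, Nat.sub_zero, one_mul]
          rw [div_self (hPne _), mul_one]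
        have e2 : dd 0 = B (m + 1) := by
          simp only [hdd, if_neg (by omega : ¬ (0 = m + 1)), hA0, hP0,
            Nat.sub_zero, one_mul]
          rw [div_self (hPne _), mul_one]
        have e3 : ee 0 = 0 := by simp [hee]
        rw [e1, e2, e3, add_zero]
      · rcases Nat.lt_or_ge j (m + 1) with hjm | hjm
        · -- 1 ≤ j ≤ m
          obtain ⟨k, rfl⟩ : ∃ k, j = k + 1 := ⟨j - 1, by omega⟩
          have hkm : k < m := by omega
          obtain ⟨l, hl⟩ : ∃ l, m - k = l + 1 := ⟨m - k - 1, by omega⟩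
          have n1 : m + 1 - (k + 1) = l + 1 := by omega
          have n2 : k + 1 - 1 = k := by omega
          have n3 : m - (k + 1) = l := by omega
          simp only [hc, hdd, hee, if_neg (by omega : ¬ (k + 1 = m + 1)),
            if_neg (by omega : ¬ (k + 1 = 0)), n1, n2, n3, hl]
          have hqq : q ^ (m + 1) = q ^ (l + 1) * q ^ (k + 1) := by
            rw [← pow_add]; congr 1; omega
          rw [Pp_succ q m, Pp_succ q k, Pp_succ q l, hqq,
            pascal_aux (Pp q m) (Pp q k) (Pp q l) (q ^ (k + 1)) (q ^ (l + 1))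
              (hPne k) (hPne l) (hqne k) (hqne l)]
          ring
        · -- j = m + 1
          have hj' : j = m + 1 := by
            have := Finset.mem_range.mp hj; omega
          subst hj'
          have e1 : c (m + 1) = A (m + 1) := by
            simp only [hc, Nat.sub_self, hB0, hP0, mul_one]
            rw [div_self (hPne _), mul_one]
          have e2 : dd (m + 1) = 0 := by simp [hdd]
          have e3 : ee (m + 1) = A (m + 1) := by
            have n1 : m + 1 - (m + 1) = 0 := by omega
            have n2 : m + 1 - 1 = m := by omega
            have n3 : m - m = 0 := by omega
            simp only [hee, if_neg (by omega : ¬ (m + 1 = 0)), n1, n2, n3,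
              hB0, hP0, mul_one, pow_zero]
            rw [div_self (hPne _), mul_one]
          rw [e1, e2, e3, zero_add]
    have hsum : ∑ j ∈ Finset.range (m + 2), c j
        = ∑ j ∈ Finset.range (m + 1), (dd j + ee (j + 1)) := by
      rw [Finset.sum_congr rfl hsplit, Finset.sum_add_distrib,
        Finset.sum_range_succ (f := dd), Finset.sum_range_succ' (f := ee)]
      simp only [hdd, hee, if_pos rfl]
      rw [Finset.sum_add_distrib]
      ring
    have hpoint : ∀ j ∈ Finset.range (m + 1), dd j + ee (j + 1)
        = (1 - ν * q ^ m) *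
          (A j * B (m - j) * (Pp q m / (Pp q j * Pp q (m - j)))) := by
      intro j hj
      have hjm : j ≤ m := by have := Finset.mem_range.mp hj; omega
      have h1 : m + 1 - j = (m - j) + 1 := by omega
      have h2 : m + 1 - (j + 1) = m - j := by omega
      have hqm : q ^ j * q ^ (m - j) = q ^ m := by
        rw [← pow_add]; congr 1; omega
      simp only [hdd, hee, if_neg (by omega : j ≠ m + 1),
        if_neg (Nat.succ_ne_zero j), Nat.add_sub_cancel, h1, h2]
      rw [hBsucc, hAsucc]
      linear_combination (-ν * A j * B (m - j) *
        (Pp q m / (Pp q j * Pp q (m - j)))) * hqm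
    calc ∑ j ∈ Finset.range (m + 2), c j
        = ∑ j ∈ Finset.range (m + 1), (dd j + ee (j + 1)) := hsum
      _ = (1 - ν * q ^ m) * ∑ j ∈ Finset.range (m + 1),
            (A j * B (m - j) * (Pp q m / (Pp q j * Pp q (m - j)))) := by
          rw [Finset.sum_congr rfl hpoint, ← Finset.mul_sum]
      _ = (1 - ν * q ^ m) * ∏ i ∈ Finset.range m, (1 - ν * q ^ i) := by rw [ih]
      _ = ∏ i ∈ Finset.range (m + 1), (1 - ν * q ^ i) := by
          rw [Finset.prod_range_succ]; ring

/-- The deformed binomial weights `φ_{q,μ,ν}(j | m)` sum to one, where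
`μ^j (ν/μ;q)_j` is written as `∏_{i<j} (μ - ν q^i)`. -/
theorem stmt2 (q μ ν : ℝ) (hq0 : 0 < q) (hq1 : q < 1)
    (hν : 0 ≤ ν) (hνμ : ν ≤ μ) (hμ : μ < 1) (m : ℕ) :
    ∑ j ∈ Finset.range (m + 1),
      ((∏ i ∈ Finset.range j, (μ - ν * q ^ i)) *
        (∏ i ∈ Finset.range (m - j), (1 - μ * q ^ i)) /
        (∏ i ∈ Finset.range m, (1 - ν * q ^ i))) *
      ((∏ i ∈ Finset.range m, (1 - q ^ (i + 1))) /
        ((∏ i ∈ Finset.range j, (1 - q ^ (i + 1))) *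
          (∏ i ∈ Finset.range (m - j), (1 - q ^ (i + 1)))))
      = 1 := by
  have hN : (0:ℝ) < ∏ i ∈ Finset.range m, (1 - ν * q ^ i) := by
    apply Finset.prod_pos
    intro i _
    have h1 : q ^ i ≤ 1 := pow_le_one₀ hq0.le hq1.le
    have h2 : ν * q ^ i ≤ ν * 1 := mul_le_mul_of_nonneg_left h1 hν
    linarith
  have hk := key q μ ν hq0 hq1 m
  simp only [Pp] at hk
  calc ∑ j ∈ Finset.range (m + 1),
      ((∏ i ∈ Finset.range j, (μ - ν * q ^ i)) *
        (∏ i ∈ Finset.range (m - j), (1 - μ * q ^ i)) /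
        (∏ i ∈ Finset.range m, (1 - ν * q ^ i))) *
      ((∏ i ∈ Finset.range m, (1 - q ^ (i + 1))) /
        ((∏ i ∈ Finset.range j, (1 - q ^ (i + 1))) *
          (∏ i ∈ Finset.range (m - j), (1 - q ^ (i + 1)))))
      = (∑ j ∈ Finset.range (m + 1),
          (∏ i ∈ Finset.range j, (μ - ν * q ^ i)) *
          (∏ i ∈ Finset.range (m - j), (1 - μ * q ^ i)) *
          ((∏ i ∈ Finset.range m, (1 - q ^ (i + 1))) /
            ((∏ i ∈ Finset.range j, (1 - q ^ (i + 1))) *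
              (∏ i ∈ Finset.range (m - j), (1 - q ^ (i + 1)))))) /
        (∏ i ∈ Finset.range m, (1 - ν * q ^ i)) := by
        rw [Finset.sum_div]
        exact Finset.sum_congr rfl fun j _ => by ring
    _ = 1 := by rw [hk]; exact div_self hN.ne'
end

section
/- The reflection operator intertwines left and right q-Hahn eigenfunctions: for all n ∈ W^k (n_1 ≥ … ≥ n_k, integers) and z ∈ (ℂ∖{1,ν⁻¹})^k, one has Ψ^ℓ_z(-n_k,…,-n_1) = (-1)^k (1-q)^{-k} m(n)^{-1} Ψ^r_z(n_1,…,n_k), where m(n) = ∏_{j=1}^{M(n)} (ν;q)_{c_j}/(q;q)_{c_j} and c_1,…,c_{M(n)} are the cluster sizes of n. -/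
open Finset

lemma card_pairs (k : ℕ) :
    (univ.filter fun p : Fin k × Fin k => p.1 < p.2).card = k*(k-1)/2 := by
  rw [Finset.card_eq_sum_card_fiberwise (f := Prod.snd) (t := univ) (fun x _ => mem_univ _)]
  have h1 : ∀ j : Fin k, ((univ.filter fun p : Fin k × Fin k => p.1 < p.2).filter
      fun p => p.2 = j).card = j.val := by
    intro j
    rw [filter_filter]
    have : ((univ : Finset (Fin k × Fin k)).filter fun p => p.1 < p.2 ∧ p.2 = j) =
        (Finset.Iio j).map ⟨fun i => (i, j), fun a b h => by simpa using congrArg Prod.fst h⟩ := by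
      ext p
      simp only [mem_filter, mem_univ, true_and, mem_map, Function.Embedding.coeFn_mk,
        mem_Iio]
      constructor
      · rintro ⟨h1, h2⟩; exact ⟨p.1, h2 ▸ h1, by simp [← h2]⟩
      · rintro ⟨a, ha, rfl⟩; exact ⟨ha, rfl⟩
    rw [this, card_map, Fin.card_Iio]
  simp only [h1]
  rw [Fin.sum_univ_eq_sum_range (fun i => i), Finset.sum_range_id]


/-- Left q-Hahn eigenfunction. -/
noncomputable def PsiL (k : ℕ) (q ν : ℝ) (z : Fin k → ℂ) (n : Fin k → ℤ) : ℂ :=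
  ∑ σ : Equiv.Perm (Fin k),
    (∏ p ∈ Finset.univ.filter (fun p : Fin k × Fin k => p.1 < p.2),
      (z (σ p.2) - (q : ℂ) * z (σ p.1)) / (z (σ p.2) - z (σ p.1))) *
    ∏ j : Fin k, ((1 - z (σ j)) / (1 - (ν : ℂ) * z (σ j))) ^ (-(n j))

/-- For `i` in the `r`-th position (counting from `0`) of its cluster of equal
coordinates of `n`, `clusterIdx k n i = r`. -/
def clusterIdx (k : ℕ) (n : Fin k → ℤ) (i : Fin k) : ℕ :=
  (Finset.univ.filter (fun j : Fin k => j < i ∧ n j = n i)).card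

/-- The constant `m(n) = ∏_{j=1}^{M(n)} (ν;q)_{c_j}/(q;q)_{c_j}` written as a
product over positions. -/
noncomputable def mConst (k : ℕ) (q ν : ℝ) (n : Fin k → ℤ) : ℝ :=
  ∏ i : Fin k, (1 - ν * q ^ clusterIdx k n i) / (1 - q ^ (clusterIdx k n i + 1))

/-- Right q-Hahn eigenfunction. -/
noncomputable def PsiR (k : ℕ) (q ν : ℝ) (z : Fin k → ℂ) (n : Fin k → ℤ) : ℂ :=
  (-1) ^ k * (1 - (q : ℂ)) ^ k * (q : ℂ) ^ (k * (k - 1) / 2) * (mConst k q ν n : ℂ) *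
  ∑ σ : Equiv.Perm (Fin k),
    (∏ p ∈ Finset.univ.filter (fun p : Fin k × Fin k => p.1 < p.2),
      (z (σ p.2) - (q : ℂ)⁻¹ * z (σ p.1)) / (z (σ p.2) - z (σ p.1))) *
    ∏ j : Fin k, ((1 - z (σ j)) / (1 - (ν : ℂ) * z (σ j))) ^ (n j)

/-- The reflection operator intertwines left and right q-Hahn eigenfunctions:
`Ψ^ℓ_z(-n_k,…,-n_1) = (-1)^k (1-q)^{-k} m(n)^{-1} Ψ^r_z(n)`. -/
theorem stmt4 (k : ℕ) (q ν : ℝ) (hq0 : 0 < q) (hq1 : q < 1)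
    (hν0 : 0 ≤ ν) (hν1 : ν < 1)
    (n : Fin k → ℤ) (hn : ∀ i j : Fin k, i ≤ j → n j ≤ n i)
    (z : Fin k → ℂ) (hz : Function.Injective z)
    (hz1 : ∀ j, z j ≠ 1) (hzν : ∀ j, (ν : ℂ) * z j ≠ 1) :
    PsiL k q ν z (fun i => -(n i.rev))
      = (-1) ^ k * ((1 - (q : ℂ)) ^ k)⁻¹ * ((mConst k q ν n : ℂ))⁻¹ *
        PsiR k q ν z n := by
  have hqC : (q : ℂ) ≠ 0 := by exact_mod_cast hq0.ne'
  have h1q : (1 : ℂ) - q ≠ 0 := by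
    intro h
    have : (q : ℂ) = 1 := by linear_combination -h
    exact hq1.ne (by exact_mod_cast this)
  have hm : mConst k q ν n ≠ 0 := by
    unfold mConst
    apply Finset.prod_ne_zero_iff.mpr
    intro i _
    apply div_ne_zero
    · have hp1 : q ^ clusterIdx k n i ≤ 1 := pow_le_one₀ hq0.le hq1.le
      have hp0 : (0:ℝ) ≤ q ^ clusterIdx k n i := pow_nonneg hq0.le _
      nlinarith
    · have : q ^ (clusterIdx k n i + 1) < 1 := pow_lt_one₀ hq0.le hq1 (Nat.succ_ne_zero _)
      linarith
  have hmC : (mConst k q ν n : ℂ) ≠ 0 := by exact_mod_cast hm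
  -- main identity
  have key : PsiL k q ν z (fun i => -(n i.rev))
      = (q : ℂ) ^ (k * (k - 1) / 2) *
        ∑ σ : Equiv.Perm (Fin k),
          (∏ p ∈ Finset.univ.filter (fun p : Fin k × Fin k => p.1 < p.2),
            (z (σ p.2) - (q : ℂ)⁻¹ * z (σ p.1)) / (z (σ p.2) - z (σ p.1))) *
          ∏ j : Fin k, ((1 - z (σ j)) / (1 - (ν : ℂ) * z (σ j))) ^ (n j) := by
    unfold PsiL
    rw [Finset.mul_sum]
    rw [← Equiv.sum_comp (Equiv.mulRight (Fin.revPerm : Equiv.Perm (Fin k)))]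
    apply Finset.sum_congr rfl
    intro σ _
    simp only [Equiv.coe_mulRight, Equiv.Perm.mul_apply, Fin.revPerm_apply, neg_neg]
    have h2 : (∏ j : Fin k, ((1 - z (σ j.rev)) / (1 - (ν : ℂ) * z (σ j.rev))) ^ (n j.rev))
        = ∏ j : Fin k, ((1 - z (σ j)) / (1 - (ν : ℂ) * z (σ j))) ^ (n j) :=
      Equiv.prod_comp Fin.revPerm
        (fun j => ((1 - z (σ j)) / (1 - (ν : ℂ) * z (σ j))) ^ (n j))
    have h1 : (∏ p ∈ Finset.univ.filter (fun p : Fin k × Fin k => p.1 < p.2),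
          (z (σ p.2.rev) - (q : ℂ) * z (σ p.1.rev)) / (z (σ p.2.rev) - z (σ p.1.rev)))
        = (q : ℂ) ^ (k * (k - 1) / 2) *
          ∏ p ∈ Finset.univ.filter (fun p : Fin k × Fin k => p.1 < p.2),
            (z (σ p.2) - (q : ℂ)⁻¹ * z (σ p.1)) / (z (σ p.2) - z (σ p.1)) := by
      have step1 : (∏ p ∈ Finset.univ.filter (fun p : Fin k × Fin k => p.1 < p.2),
            (z (σ p.2.rev) - (q : ℂ) * z (σ p.1.rev)) / (z (σ p.2.rev) - z (σ p.1.rev)))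
          = ∏ p ∈ Finset.univ.filter (fun p : Fin k × Fin k => p.1 < p.2),
            (z (σ p.1) - (q : ℂ) * z (σ p.2)) / (z (σ p.1) - z (σ p.2)) := by
        refine Finset.prod_bij' (fun p _ => (p.2.rev, p.1.rev))
          (fun p _ => (p.2.rev, p.1.rev)) ?_ ?_ ?_ ?_ ?_ <;>
          · intro p hp
            simp only [mem_filter, mem_univ, true_and, Fin.rev_lt_rev, Fin.rev_rev] at hp ⊢
            try exact hp
      rw [step1]
      rw [← card_pairs k, ← Finset.prod_const, ← Finset.prod_mul_distrib]
      apply Finset.prod_congr rfl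
      intro p hp
      simp only [mem_filter, mem_univ, true_and] at hp
      have hne : z (σ p.1) - z (σ p.2) ≠ 0 := by
        intro h
        have : z (σ p.1) = z (σ p.2) := by linear_combination h
        exact hp.ne (σ.injective (hz this))
      have hne' : z (σ p.2) - z (σ p.1) ≠ 0 := by
        intro h; apply hne; linear_combination -h
      field_simp
      ring
    rw [h1, h2, mul_assoc]
  rw [key, PsiR, ← mul_assoc]
  congr 1
  field_simp
  have hne : ((-1:ℂ)) ^ k * (-1) ^ k = 1 := by
    rw [← pow_add]
    exact Even.neg_one_pow ⟨k, rfl⟩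
  linear_combination (-1 : ℂ) * hne
end

section
/- The Tracy–Widom symmetrization identity: for 0 < τ < 1 and complex ξ_1,…,ξ_k with |ξ_j| < 1 and pairwise distinct, ∑_{σ ∈ S(k)} ∏_{i<j} S_ASEP(ξ_{σ(i)}, ξ_{σ(j)})/(ξ_{σ(j)} - ξ_{σ(i)}) · ξ_{σ(2)} ξ_{σ(3)}² ⋯ ξ_{σ(k)}^{k-1} / [(1 - ξ_{σ(1)}⋯ξ_{σ(k)})(1 - ξ_{σ(2)}⋯ξ_{σ(k)})⋯(1 - ξ_{σ(k)})] = τ^{k(k-1)/2} / ∏_{j=1}^k (1 - ξ_j). -/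
open Finset

/-- The ASEP cross-term `S_ASEP(ξ₁,ξ₂) = τ - (1+τ)ξ₁ + ξ₁ξ₂`. -/
noncomputable def SASEP (τ : ℝ) (x y : ℂ) : ℂ := (τ : ℂ) - (1 + (τ : ℂ)) * x + x * y

open Polynomial in

lemma L1 {F : Type*} [Field F] [DecidableEq F] (s : Finset F) (P : F[X])
    (hdeg : P.degree < (#s : ℕ)) :
    ∑ x ∈ s, P.eval x * Lagrange.nodalWeight s id x = P.coeff (#s - 1) := by
  have hinj : Set.InjOn (id : F → F) s := Function.injective_id.injOn
  have hP := Lagrange.eq_interpolate hinj hdeg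
  conv_rhs => rw [hP]
  rw [Lagrange.interpolate_apply, finset_sum_coeff]
  refine (Finset.sum_congr rfl fun x hx => ?_).symm
  rw [Lagrange.basis_eq_prod_sub_inv_mul_nodal_div hx, ← Lagrange.nodal_erase_eq_nodal_div hx]
  have hmon : (Lagrange.nodal (s.erase x) (id : F → F)).Monic := Lagrange.nodal_monic
  have hc : (Lagrange.nodal (s.erase x) (id : F → F)).coeff (#s - 1) = 1 := by
    have : #s - 1 = (Lagrange.nodal (s.erase x) (id : F → F)).natDegree := by
      rw [Lagrange.natDegree_nodal, card_erase_of_mem hx]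
    rw [this]; exact hmon.coeff_natDegree
  simp [coeff_C_mul, hc, mul_comm]

lemma key2 (n : ℕ) (t : ℂ) (ξ : Fin (n+1) → ℂ) (hinj : Function.Injective ξ)
    (h0 : ∀ i, ξ i ≠ 0) (ht0 : t ≠ 0) (hti : ∀ i, ξ i ≠ t) :
    ∑ p, (1 - ξ p) * ∏ i ∈ Finset.univ.erase p,
        (ξ i * (t - (1+t)*ξ p + ξ p * ξ i) / (ξ i - ξ p))
      = t ^ n * (1 - ∏ i, ξ i) := by
  classical
  set im : Finset ℂ := Finset.univ.image ξ with him
  have hmem : ∀ z : ℂ, z ∈ im ↔ ∃ i, ξ i = z := by simp [him]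
  have h0im : (0:ℂ) ∉ im := by rw [hmem]; rintro ⟨i, hi⟩; exact h0 i hi
  have htim : t ∉ im := by rw [hmem]; rintro ⟨i, hi⟩; exact hti i hi
  have h0ins : (0:ℂ) ∉ insert t im := by
    simp only [mem_insert]; rintro (h | h); exacts [ht0 h.symm, h0im h]
  have htins : t ∉ insert (0:ℂ) im := by
    simp only [mem_insert]; rintro (h | h); exacts [ht0 h, htim h]
  set s : Finset ℂ := insert 0 (insert t im) with hs
  have hinjOn : ∀ x ∈ (univ : Finset (Fin (n+1))), ∀ y ∈ univ, ξ x = ξ y → x = y :=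
    fun x _ y _ h => hinj h
  have hcard_im : #im = n+1 := by
    rw [him, Finset.card_image_of_injective _ hinj, Finset.card_univ, Fintype.card_fin]
  have hcard : #s = n+3 := by
    rw [hs, Finset.card_insert_of_notMem h0ins, Finset.card_insert_of_notMem htim, hcard_im]
  set N : Polynomial ℂ :=
    ∏ i, (Polynomial.C (ξ i * t) + Polynomial.C (ξ i * (ξ i - (1+t))) * Polynomial.X) with hN
  have hdegN : N.natDegree ≤ n+1 := by
    refine le_trans (Polynomial.natDegree_prod_le _ _) ?_
    refine le_trans (Finset.sum_le_sum (g := fun _ => 1) fun i _ => ?_) (by simp)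
    refine le_trans (Polynomial.natDegree_add_le _ _) ?_
    simp only [Polynomial.natDegree_C, max_le_iff]
    exact ⟨Nat.zero_le _, le_trans (Polynomial.natDegree_C_mul_le _ _)
      (le_of_eq Polynomial.natDegree_X)⟩
  have hL := L1 s N (lt_of_le_of_lt Polynomial.degree_le_natDegree
    (by rw [hcard]; exact_mod_cast Nat.lt_of_le_of_lt hdegN (by omega)))
  rw [Polynomial.coeff_eq_zero_of_natDegree_lt (by rw [hcard]; omega)] at hL
  have hEv : ∀ z : ℂ, N.eval z = ∏ i, (ξ i * t + ξ i * (ξ i - (1+t)) * z) := by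
    intro z; rw [hN, Polynomial.eval_prod]; exact Finset.prod_congr rfl fun i _ => by simp
  -- expand the sum over s
  rw [show (∑ x ∈ s, N.eval x * Lagrange.nodalWeight s id x)
      = N.eval 0 * Lagrange.nodalWeight s id 0 + (N.eval t * Lagrange.nodalWeight s id t
        + ∑ p : Fin (n+1), N.eval (ξ p) * Lagrange.nodalWeight s id (ξ p)) by
    rw [hs, Finset.sum_insert h0ins, Finset.sum_insert htim, Finset.sum_image hinjOn] ] at hL
  -- weight computations
  have hW0 : Lagrange.nodalWeight s id 0 = (0-t)⁻¹ * ∏ i, (0 - ξ i)⁻¹ := by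
    rw [Lagrange.nodalWeight, hs, Finset.erase_insert h0ins, Finset.prod_insert htim,
      Finset.prod_image hinjOn]
    simp only [id_eq]
  have hWt : Lagrange.nodalWeight s id t = (t-0)⁻¹ * ∏ i, (t - ξ i)⁻¹ := by
    rw [Lagrange.nodalWeight, hs, Finset.insert_comm, Finset.erase_insert htins,
      Finset.prod_insert h0im, Finset.prod_image hinjOn]
    simp only [id_eq]
  have hWp : ∀ p, Lagrange.nodalWeight s id (ξ p)
      = (ξ p - 0)⁻¹ * ((ξ p - t)⁻¹ * ∏ i ∈ univ.erase p, (ξ p - ξ i)⁻¹) := by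
    intro p
    have h1 : s.erase (ξ p) = insert 0 (insert t ((univ.erase p).image ξ)) := by
      rw [hs, Finset.erase_insert_of_ne (Ne.symm (h0 p)),
        Finset.erase_insert_of_ne (Ne.symm (hti p)), Finset.image_erase hinj]
    have h2 : (0:ℂ) ∉ insert t ((univ.erase p).image ξ) := by
      simp only [mem_insert, Finset.mem_image]
      rintro (h | ⟨i, _, hi⟩); exacts [ht0 h.symm, h0 i hi]
    have h3 : t ∉ (univ.erase p).image ξ := by
      simp only [Finset.mem_image]; rintro ⟨i, _, hi⟩; exact hti i hi
    rw [Lagrange.nodalWeight, h1, Finset.prod_insert h2, Finset.prod_insert h3,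
      Finset.prod_image (fun x _ y _ h => hinj h)]
    simp only [id_eq]
  have hprodinv : ∀ (f : Fin (n+1) → ℂ), (∏ i, (f i)⁻¹) = (∏ i, f i)⁻¹ :=
    fun f => by rw [Finset.prod_inv_distrib]
  have hmain0 : N.eval 0 * Lagrange.nodalWeight s id 0 = (-1:ℂ)^n * t^n := by
    rw [hW0, hEv, Finset.prod_congr rfl
      (fun i _ => show ξ i * t + ξ i * (ξ i - (1+t)) * 0 = (-1) * (t * (0 - ξ i)) from by ring),
      Finset.prod_mul_distrib, Finset.prod_mul_distrib, Finset.prod_const, Finset.prod_const,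
      Finset.card_univ, Fintype.card_fin, hprodinv]
    have hP : (∏ i, ((0:ℂ) - ξ i)) ≠ 0 :=
      Finset.prod_ne_zero_iff.2 fun i _ => sub_ne_zero_of_ne (Ne.symm (h0 i))
    have h0t : (0:ℂ) - t ≠ 0 := sub_ne_zero_of_ne (Ne.symm ht0)
    have e1 : (∏ i, ((0:ℂ) - ξ i)) * (∏ i, ((0:ℂ) - ξ i))⁻¹ = 1 := mul_inv_cancel₀ hP
    have e2 : ((0:ℂ) - t) * ((0:ℂ) - t)⁻¹ = 1 := mul_inv_cancel₀ h0t
    linear_combination ((-1:ℂ)^n * (-1) * (t^n * t) * ((0:ℂ)-t)⁻¹) * e1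
      + ((-1:ℂ)^n * t^n) * e2
  have hmaint : N.eval t * Lagrange.nodalWeight s id t = -((-1:ℂ)^n * t^n * ∏ i, ξ i) := by
    rw [hWt, hEv, Finset.prod_congr rfl
      (fun i _ => show ξ i * t + ξ i * (ξ i - (1+t)) * t = (-1) * (t * (ξ i * (t - ξ i))) from by
        ring),
      Finset.prod_mul_distrib, Finset.prod_mul_distrib, Finset.prod_mul_distrib,
      Finset.prod_const, Finset.prod_const, Finset.card_univ, Fintype.card_fin, hprodinv,
      sub_zero]
    have hQ : (∏ i, (t - ξ i)) ≠ 0 :=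
      Finset.prod_ne_zero_iff.2 fun i _ => sub_ne_zero_of_ne (Ne.symm (hti i))
    have e1 : (∏ i, (t - ξ i)) * (∏ i, (t - ξ i))⁻¹ = 1 := mul_inv_cancel₀ hQ
    have e2 : t * t⁻¹ = 1 := mul_inv_cancel₀ ht0
    linear_combination ((-1:ℂ)^n * (-1) * (t^n * t) * (∏ i, ξ i) * t⁻¹) * e1
      + (-((-1:ℂ)^n * t^n * ∏ i, ξ i)) * e2
  have hmainp : ∀ p, N.eval (ξ p) * Lagrange.nodalWeight s id (ξ p)
      = -((-1:ℂ)^n * ((1 - ξ p) * ∏ i ∈ Finset.univ.erase p,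
          (ξ i * (t - (1+t)*ξ p + ξ p * ξ i) / (ξ i - ξ p)))) := by
    intro p
    have hne : ∀ i ∈ univ.erase p, ξ i - ξ p ≠ 0 := fun i hi =>
      sub_ne_zero_of_ne fun h => (Finset.mem_erase.1 hi).1 (hinj h)
    rw [hWp p, hEv, ← Finset.mul_prod_erase univ _ (Finset.mem_univ p),
      Finset.prod_congr rfl (fun i hi =>
        show ξ i * t + ξ i * (ξ i - (1+t)) * ξ p
          = (-1) * ((ξ i * (t - (1+t)*ξ p + ξ p * ξ i) / (ξ i - ξ p)) * (ξ p - ξ i)) from by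
        have h := hne i hi
        field_simp
        ring),
      Finset.prod_mul_distrib, Finset.prod_mul_distrib, Finset.prod_const,
      Finset.card_erase_of_mem (Finset.mem_univ p), Finset.card_univ, Fintype.card_fin,
      show (∏ i ∈ univ.erase p, (ξ p - ξ i)⁻¹) = (∏ i ∈ univ.erase p, (ξ p - ξ i))⁻¹ from by
        rw [Finset.prod_inv_distrib],
      sub_zero, show n + 1 - 1 = n from rfl]
    have hD : (∏ i ∈ univ.erase p, (ξ p - ξ i)) ≠ 0 :=
      Finset.prod_ne_zero_iff.2 fun i hi =>
        sub_ne_zero_of_ne fun h => (Finset.mem_erase.1 hi).1 (hinj h.symm)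
    have hpt : ξ p - t ≠ 0 := sub_ne_zero_of_ne (hti p)
    have hp0 : ξ p ≠ 0 := h0 p
    have e1 : (∏ i ∈ univ.erase p, (ξ p - ξ i)) * (∏ i ∈ univ.erase p, (ξ p - ξ i))⁻¹ = 1 :=
      mul_inv_cancel₀ hD
    have e2 : ξ p * (ξ p)⁻¹ = 1 := mul_inv_cancel₀ hp0
    have e3 : (ξ p - t) * (ξ p - t)⁻¹ = 1 := mul_inv_cancel₀ hpt
    set G := ∏ i ∈ Finset.univ.erase p, (ξ i * (t - (1+t)*ξ p + ξ p * ξ i) / (ξ i - ξ p)) with hG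
    linear_combination ((ξ p * t + ξ p * (ξ p - (1 + t)) * ξ p) * ((-1:ℂ)^n * G)
        * (ξ p)⁻¹ * (ξ p - t)⁻¹) * e1
      + ((1 - ξ p) * (t - ξ p) * (-1:ℂ)^n * G * (ξ p - t)⁻¹) * e2
      + (-((1 - ξ p) * (-1:ℂ)^n * G)) * e3
  rw [hmain0, hmaint, Finset.sum_congr rfl (fun p _ => hmainp p)] at hL
  rw [Finset.sum_neg_distrib, ← Finset.mul_sum] at hL
  have hne1 : ((-1:ℂ)^n) ≠ 0 := pow_ne_zero _ (by norm_num)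
  have h2 : (-1:ℂ)^n * (t^n - t^n * (∏ i, ξ i)
      - ∑ p, (1 - ξ p) * ∏ i ∈ Finset.univ.erase p,
          (ξ i * (t - (1+t)*ξ p + ξ p * ξ i) / (ξ i - ξ p))) = 0 := by
    linear_combination hL
  rcases mul_eq_zero.1 h2 with h | h
  · exact absurd h hne1
  · linear_combination -h

lemma key_s5 (n : ℕ) (t : ℂ) (ξ : Fin (n+1) → ℂ) (hinj : Function.Injective ξ) :
    ∑ p, (1 - ξ p) * ∏ i ∈ Finset.univ.erase p,
        (ξ i * (t - (1+t)*ξ p + ξ p * ξ i) / (ξ i - ξ p))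
      = t ^ n * (1 - ∏ i, ξ i) := by
  classical
  by_cases hz : ∃ j0, ξ j0 = 0
  · obtain ⟨j0, hj0⟩ := hz
    have hrhs : (∏ i, ξ i) = 0 := Finset.prod_eq_zero (Finset.mem_univ j0) hj0
    rw [hrhs, sub_zero, mul_one]
    rw [Finset.sum_eq_single_of_mem j0 (Finset.mem_univ j0) (fun p _ hp => ?_)]
    · simp only [hj0]
      rw [Finset.prod_congr rfl (fun i hi => show ξ i * (t - (1+t)*0 + 0 * ξ i) / (ξ i - 0) = t
        from by
          have hne : ξ i ≠ 0 := fun h => (Finset.mem_erase.1 hi).1 (hinj (h.trans hj0.symm))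
          field_simp; ring),
        Finset.prod_const, Finset.card_erase_of_mem (Finset.mem_univ j0), Finset.card_univ,
        Fintype.card_fin]
      simp
    · refine mul_eq_zero_of_right _ (Finset.prod_eq_zero (i := j0) ?_ ?_)
      · exact Finset.mem_erase.2 ⟨fun h => hp h.symm, Finset.mem_univ _⟩
      · rw [hj0]; simp
  · push_neg at hz
    set P : Polynomial ℂ := ∑ p, Polynomial.C (1 - ξ p) * ∏ i ∈ Finset.univ.erase p,
      (Polynomial.C (ξ i / (ξ i - ξ p)) *
        (Polynomial.C (1 - ξ p) * Polynomial.X + Polynomial.C (ξ p * (ξ i - 1)))) with hP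
    set Q : Polynomial ℂ := Polynomial.C (1 - ∏ i, ξ i) * Polynomial.X ^ n with hQ
    have hPev : ∀ z : ℂ, P.eval z = ∑ p, (1 - ξ p) * ∏ i ∈ Finset.univ.erase p,
        (ξ i * (z - (1+z)*ξ p + ξ p * ξ i) / (ξ i - ξ p)) := by
      intro z
      rw [hP, Polynomial.eval_finset_sum]
      refine Finset.sum_congr rfl fun p _ => ?_
      rw [Polynomial.eval_mul, Polynomial.eval_C, Polynomial.eval_prod]
      congr 1
      refine Finset.prod_congr rfl fun i hi => ?_
      simp only [Polynomial.eval_mul, Polynomial.eval_add, Polynomial.eval_C, Polynomial.eval_X]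
      rw [div_mul_eq_mul_div,
        show ξ i * ((1 - ξ p) * z + ξ p * (ξ i - 1)) = ξ i * (z - (1+z)*ξ p + ξ p * ξ i)
          from by ring]
    have hQev : ∀ z : ℂ, Q.eval z = z ^ n * (1 - ∏ i, ξ i) := by
      intro z
      rw [hQ, Polynomial.eval_mul, Polynomial.eval_C, Polynomial.eval_pow, Polynomial.eval_X,
        mul_comm]
    have hPQ : P = Q := by
      apply Polynomial.eq_of_infinite_eval_eq
      have hfin : Set.Finite ({0} ∪ Set.range ξ : Set ℂ) :=
        (Set.finite_singleton 0).union (Set.finite_range ξ)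
      refine Set.Infinite.mono ?_ hfin.infinite_compl
      intro z hzc
      simp only [Set.mem_compl_iff, Set.mem_union, Set.mem_singleton_iff, Set.mem_range,
        not_or, not_exists] at hzc
      show z ∈ {x | Polynomial.eval x P = Polynomial.eval x Q}
      rw [Set.mem_setOf_eq, hPev z, hQev z]
      exact key2 n z ξ hinj hz hzc.1 (fun i => hzc.2 i)
    rw [← hPev t, hPQ, hQev t]


-- pair-set decomposition
lemma pairsplit (n : ℕ) :
    (Finset.univ.filter (fun p : Fin (n+1) × Fin (n+1) => p.1 < p.2))
    = ((Finset.univ.filter (fun q : Fin n × Fin n => q.1 < q.2)).image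
        (fun q => (q.1.succ, q.2.succ)))
      ∪ (Finset.univ.image (fun j : Fin n => ((0 : Fin (n+1)), j.succ))) := by
  ext ⟨a, b⟩
  simp only [mem_filter, mem_union, mem_image, mem_univ, true_and, Prod.ext_iff, Prod.exists]
  constructor
  · intro hab
    rcases Fin.eq_zero_or_eq_succ a with ha | ⟨i, ha⟩
    · rcases Fin.eq_zero_or_eq_succ b with hb | ⟨j, hb⟩
      · exact absurd (ha ▸ hb ▸ hab) (lt_irrefl _)
      · exact Or.inr ⟨j, ha.symm, hb.symm⟩
    · rcases Fin.eq_zero_or_eq_succ b with hb | ⟨j, hb⟩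
      · subst hb; exact absurd hab (Fin.not_lt_zero _)
      · subst ha; subst hb
        exact Or.inl ⟨i, j, Fin.succ_lt_succ_iff.1 hab, rfl, rfl⟩
  · rintro (⟨i, j, hij, ha, hb⟩ | ⟨j, ha, hb⟩)
    · subst ha; subst hb; exact Fin.succ_lt_succ_iff.2 hij
    · subst ha; subst hb; exact Fin.succ_pos j

lemma filtersplit (n : ℕ) (i : Fin n) :
    (Finset.univ.filter (fun l : Fin (n+1) => i.succ ≤ l))
      = (Finset.univ.filter (fun j : Fin n => i ≤ j)).image Fin.succ := by
  ext l
  simp only [mem_filter, mem_image, mem_univ, true_and]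
  constructor
  · intro hl
    rcases Fin.eq_zero_or_eq_succ l with h0 | ⟨j, hj⟩
    · subst h0; exact absurd hl (by simp [Fin.le_def])
    · subst hj; exact ⟨j, Fin.succ_le_succ_iff.1 hl, rfl⟩
  · rintro ⟨j, hj, rfl⟩; exact Fin.succ_le_succ_iff.2 hj

lemma split (n : ℕ) (t : ℂ) (η : Fin (n+1) → ℂ) :
    (∏ p ∈ Finset.univ.filter (fun p : Fin (n+1) × Fin (n+1) => p.1 < p.2),
        ((t - (1 + t) * η p.1 + η p.1 * η p.2) / (η p.2 - η p.1))) *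
      (∏ m : Fin (n+1), η m ^ (m : ℕ)) /
      (∏ m : Fin (n+1), (1 - ∏ l ∈ Finset.univ.filter (fun l : Fin (n+1) => m ≤ l), η l))
    = ((∏ j : Fin n, ((t - (1 + t) * η 0 + η 0 * η j.succ) / (η j.succ - η 0)))
        * (∏ j : Fin n, η j.succ) / (1 - ∏ m : Fin (n+1), η m))
      * ((∏ q ∈ Finset.univ.filter (fun q : Fin n × Fin n => q.1 < q.2),
            ((t - (1 + t) * η q.1.succ + η q.1.succ * η q.2.succ)
              / (η q.2.succ - η q.1.succ))) *
          (∏ j : Fin n, η j.succ ^ (j : ℕ)) /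
          (∏ j : Fin n,
            (1 - ∏ l ∈ Finset.univ.filter (fun l : Fin n => j ≤ l), η l.succ))) := by
  -- (a) pairs
  have hdisj : Disjoint
      ((Finset.univ.filter (fun q : Fin n × Fin n => q.1 < q.2)).image
        (fun q => (q.1.succ, q.2.succ)))
      (Finset.univ.image (fun j : Fin n => ((0 : Fin (n+1)), j.succ))) := by
    rw [Finset.disjoint_left]
    rintro ⟨a, b⟩ h1 h2
    simp only [mem_image, mem_univ, true_and, Prod.ext_iff] at h1 h2
    obtain ⟨q, _, hq1, _⟩ := h1
    obtain ⟨j, hj1, _⟩ := h2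
    exact Fin.succ_ne_zero q.1 (hq1.trans hj1.symm)
  rw [pairsplit n, Finset.prod_union hdisj,
    Finset.prod_image (fun x _ y _ h => Prod.ext
      (Fin.succ_injective n (congrArg Prod.fst h)) (Fin.succ_injective n (congrArg Prod.snd h))),
    Finset.prod_image (fun x _ y _ h => Fin.succ_injective n (congrArg Prod.snd h))]
  -- (b) powers
  rw [Fin.prod_univ_succ (f := fun m : Fin (n+1) => η m ^ (m : ℕ))]
  -- (c) denominators
  rw [Fin.prod_univ_succ (f := fun m : Fin (n+1) =>
    (1 - ∏ l ∈ Finset.univ.filter (fun l : Fin (n+1) => m ≤ l), η l))]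
  rw [show (Finset.univ.filter (fun l : Fin (n+1) => (0:Fin (n+1)) ≤ l)) = Finset.univ from
    Finset.filter_true_of_mem (fun _ _ => Fin.zero_le _)]
  rw [Finset.prod_congr rfl (fun i (_ : i ∈ (univ : Finset (Fin n))) => show
      (1 - ∏ l ∈ Finset.univ.filter (fun l : Fin (n+1) => i.succ ≤ l), η l)
      = (1 - ∏ l ∈ Finset.univ.filter (fun l : Fin n => i ≤ l), η l.succ) from by
    rw [filtersplit n i, Finset.prod_image (fun x _ y _ h => Fin.succ_injective n h)])]
  rw [Finset.prod_congr rfl (fun i (_ : i ∈ (univ : Finset (Fin n))) => show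
      η i.succ ^ ((i.succ : Fin (n+1)) : ℕ) = η i.succ ^ (i:ℕ) * η i.succ from by
    rw [Fin.val_succ, pow_succ])]
  rw [Finset.prod_mul_distrib]
  dsimp only
  rw [Fin.val_zero, pow_zero]
  generalize (∏ x ∈ Finset.univ.filter (fun q : Fin n × Fin n => q.1 < q.2),
    ((t - (1 + t) * η x.1.succ + η x.1.succ * η x.2.succ) / (η x.2.succ - η x.1.succ))) = A
  generalize (∏ x : Fin n, ((t - (1 + t) * η 0 + η 0 * η x.succ) / (η x.succ - η 0))) = B
  generalize (∏ x : Fin n, η x.succ ^ (x:ℕ)) = C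
  generalize (∏ x : Fin n, η x.succ) = D
  generalize (∏ l : Fin (n+1), η l) = E
  generalize (∏ x : Fin n,
    (1 - ∏ l ∈ Finset.univ.filter (fun l : Fin n => x ≤ l), η l.succ)) = F
  rw [← div_div]
  ring

lemma alg1 (a b K S E T : ℂ) (ha : a ≠ 0) (hb : b ≠ 0) (hK : K ≠ 0) :
    S * E / a * (T / K) = T / (a * (b * K)) * (b * (E * S)) := by
  field_simp

lemma alg2 (a P T u : ℂ) (ha : a ≠ 0) : T / (a * P) * (u * a) = T * u / P := by
  rcases eq_or_ne P 0 with h | h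
  · simp [h]
  · field_simp

lemma mainlem (k : ℕ) (t : ℂ) : ∀ (ξ : Fin k → ℂ), Function.Injective ξ →
    (∀ A : Finset (Fin k), A.Nonempty → ∏ i ∈ A, ξ i ≠ 1) →
    ∑ σ : Equiv.Perm (Fin k),
      (∏ p ∈ Finset.univ.filter (fun p : Fin k × Fin k => p.1 < p.2),
        ((t - (1 + t) * ξ (σ p.1) + ξ (σ p.1) * ξ (σ p.2)) / (ξ (σ p.2) - ξ (σ p.1)))) *
      (∏ m : Fin k, ξ (σ m) ^ (m : ℕ)) /
      (∏ m : Fin k, (1 - ∏ l ∈ Finset.univ.filter (fun l : Fin k => m ≤ l), ξ (σ l)))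
      = t ^ (k * (k - 1) / 2) / ∏ j : Fin k, (1 - ξ j) := by
  induction k with
  | zero =>
    intro ξ _ _
    simp
  | succ n IH =>
    intro ξ hinj h1
    classical
    -- the reduced point configurations
    set ξ' : Fin (n+1) → Fin n → ℂ := fun p i => ξ (Equiv.swap 0 p i.succ) with hξ'
    have hcompinj : ∀ p : Fin (n+1),
        Function.Injective (fun i : Fin n => Equiv.swap 0 p i.succ) :=
      fun p a b h => Fin.succ_injective n ((Equiv.swap 0 p).injective h)
    have hinj' : ∀ p, Function.Injective (ξ' p) :=
      fun p a b h => hcompinj p (hinj h)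
    have himage : ∀ p : Fin (n+1),
        Finset.univ.image (fun i : Fin n => Equiv.swap 0 p i.succ) = Finset.univ.erase p := by
      intro p
      apply Finset.eq_of_subset_of_card_le
      · intro x hx
        simp only [Finset.mem_image, Finset.mem_univ, true_and] at hx
        obtain ⟨i, rfl⟩ := hx
        refine Finset.mem_erase.2 ⟨fun h => ?_, Finset.mem_univ _⟩
        have h2 := congrArg (Equiv.swap 0 p) h
        rw [Equiv.swap_apply_self, Equiv.swap_apply_right] at h2
        exact Fin.succ_ne_zero i h2
      · rw [Finset.card_erase_of_mem (Finset.mem_univ p),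
          Finset.card_image_of_injective _ (hcompinj p)]
        simp
    have hresum : ∀ (p : Fin (n+1)) (f : ℂ → ℂ),
        (∏ i : Fin n, f (ξ' p i)) = ∏ i ∈ Finset.univ.erase p, f (ξ i) := by
      intro p f
      rw [← himage p, Finset.prod_image (fun x _ y _ h => hcompinj p h)]
    have h1' : ∀ p, ∀ A : Finset (Fin n), A.Nonempty → ∏ i ∈ A, ξ' p i ≠ 1 := by
      intro p A hA
      have : ∏ i ∈ A, ξ' p i
          = ∏ j ∈ A.image (fun i : Fin n => Equiv.swap 0 p i.succ), ξ j := by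
        rw [Finset.prod_image (fun x _ y _ h => hcompinj p h)]
      rw [this]
      exact h1 _ (hA.image _)
    have h1p : ∀ p : Fin (n+1), (1:ℂ) - ξ p ≠ 0 := by
      intro p
      have := h1 {p} (Finset.singleton_nonempty p)
      rw [Finset.prod_singleton] at this
      exact sub_ne_zero.2 (Ne.symm this)
    have hall : (1:ℂ) - ∏ m, ξ m ≠ 0 :=
      sub_ne_zero.2 (Ne.symm (h1 Finset.univ Finset.univ_nonempty))
    -- reindex the permutation sum
    rw [show (∑ σ : Equiv.Perm (Fin (n+1)),
        (∏ p ∈ Finset.univ.filter (fun p : Fin (n+1) × Fin (n+1) => p.1 < p.2),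
          ((t - (1 + t) * ξ (σ p.1) + ξ (σ p.1) * ξ (σ p.2)) / (ξ (σ p.2) - ξ (σ p.1)))) *
        (∏ m : Fin (n+1), ξ (σ m) ^ (m : ℕ)) /
        (∏ m : Fin (n+1),
          (1 - ∏ l ∈ Finset.univ.filter (fun l : Fin (n+1) => m ≤ l), ξ (σ l))))
      = ∑ x : Fin (n+1) × Equiv.Perm (Fin n),
        (∏ p ∈ Finset.univ.filter (fun p : Fin (n+1) × Fin (n+1) => p.1 < p.2),
          ((t - (1 + t) * ξ ((Equiv.Perm.decomposeFin.symm x) p.1)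
            + ξ ((Equiv.Perm.decomposeFin.symm x) p.1) * ξ ((Equiv.Perm.decomposeFin.symm x) p.2))
            / (ξ ((Equiv.Perm.decomposeFin.symm x) p.2) - ξ ((Equiv.Perm.decomposeFin.symm x) p.1)))) *
        (∏ m : Fin (n+1), ξ ((Equiv.Perm.decomposeFin.symm x) m) ^ (m : ℕ)) /
        (∏ m : Fin (n+1),
          (1 - ∏ l ∈ Finset.univ.filter (fun l : Fin (n+1) => m ≤ l),
            ξ ((Equiv.Perm.decomposeFin.symm x) l)))
      from (Equiv.sum_comp Equiv.Perm.decomposeFin.symm _).symm,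
      Fintype.sum_prod_type]
    -- rewrite each summand via `split` and the inductive hypothesis
    have hsummand : ∀ (p : Fin (n+1)) (e : Equiv.Perm (Fin n)),
        (∏ q ∈ Finset.univ.filter (fun q : Fin (n+1) × Fin (n+1) => q.1 < q.2),
          ((t - (1 + t) * ξ ((Equiv.Perm.decomposeFin.symm (p, e)) q.1)
            + ξ ((Equiv.Perm.decomposeFin.symm (p, e)) q.1) * ξ ((Equiv.Perm.decomposeFin.symm (p, e)) q.2))
            / (ξ ((Equiv.Perm.decomposeFin.symm (p, e)) q.2) - ξ ((Equiv.Perm.decomposeFin.symm (p, e)) q.1)))) *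
        (∏ m : Fin (n+1), ξ ((Equiv.Perm.decomposeFin.symm (p, e)) m) ^ (m : ℕ)) /
        (∏ m : Fin (n+1),
          (1 - ∏ l ∈ Finset.univ.filter (fun l : Fin (n+1) => m ≤ l),
            ξ ((Equiv.Perm.decomposeFin.symm (p, e)) l)))
        = ((∏ i ∈ Finset.univ.erase p, ((t - (1 + t) * ξ p + ξ p * ξ i) / (ξ i - ξ p)))
            * (∏ i ∈ Finset.univ.erase p, ξ i) / (1 - ∏ m, ξ m))
          * ((∏ q ∈ Finset.univ.filter (fun q : Fin n × Fin n => q.1 < q.2),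
              ((t - (1 + t) * ξ' p (e q.1) + ξ' p (e q.1) * ξ' p (e q.2))
                / (ξ' p (e q.2) - ξ' p (e q.1)))) *
            (∏ m : Fin n, ξ' p (e m) ^ (m : ℕ)) /
            (∏ m : Fin n,
              (1 - ∏ l ∈ Finset.univ.filter (fun l : Fin n => m ≤ l), ξ' p (e l)))) := by
      intro p e
      rw [split n t (fun j => ξ ((Equiv.Perm.decomposeFin.symm (p, e)) j)),
        show (∏ m : Fin (n+1), ξ ((Equiv.Perm.decomposeFin.symm (p, e)) m)) = ∏ m, ξ m from
          Equiv.prod_comp _ ξ]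
      simp only [Equiv.Perm.decomposeFin_symm_apply_zero,
        Equiv.Perm.decomposeFin_symm_apply_succ]
      have hfr : ∀ g : ℂ → ℂ, (∏ x : Fin n, g (ξ' p (e x))) = ∏ i ∈ Finset.univ.erase p, g (ξ i) :=
        fun g => (Equiv.prod_comp e (fun i => g (ξ' p i))).trans (hresum p g)
      rw [show (∏ x : Fin n, ((t - (1 + t) * ξ p + ξ p * ξ ((Equiv.swap 0 p) (e x).succ))
            / (ξ ((Equiv.swap 0 p) (e x).succ) - ξ p)))
          = ∏ i ∈ Finset.univ.erase p, ((t - (1 + t) * ξ p + ξ p * ξ i) / (ξ i - ξ p)) from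
          hfr (fun y => (t - (1 + t) * ξ p + ξ p * y) / (y - ξ p)),
        show (∏ x : Fin n, ξ ((Equiv.swap 0 p) (e x).succ)) = ∏ i ∈ Finset.univ.erase p, ξ i from
          hfr (fun y => y)]
    -- inner sums via the inductive hypothesis
    have hIH : ∀ p : Fin (n+1),
        (∑ e : Equiv.Perm (Fin n),
          (∏ q ∈ Finset.univ.filter (fun q : Fin n × Fin n => q.1 < q.2),
              ((t - (1 + t) * ξ' p (e q.1) + ξ' p (e q.1) * ξ' p (e q.2))
                / (ξ' p (e q.2) - ξ' p (e q.1)))) *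
            (∏ m : Fin n, ξ' p (e m) ^ (m : ℕ)) /
            (∏ m : Fin n,
              (1 - ∏ l ∈ Finset.univ.filter (fun l : Fin n => m ≤ l), ξ' p (e l))))
        = t ^ (n * (n - 1) / 2) / ∏ j : Fin n, (1 - ξ' p j) :=
      fun p => IH (ξ' p) (hinj' p) (h1' p)
    rw [Finset.sum_congr rfl (fun p (_ : p ∈ Finset.univ) =>
      Finset.sum_congr rfl (fun e (_ : e ∈ Finset.univ) => hsummand p e))]
    rw [Finset.sum_congr rfl (fun p (_ : p ∈ Finset.univ) =>
      ((Finset.mul_sum Finset.univ _ _).symm.trans (by rw [hIH p]) :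
        (∑ e : Equiv.Perm (Fin n), _ * _) = _))]
    -- per-p algebraic normalization
    have hKP : ∀ p : Fin (n+1), (∏ i ∈ Finset.univ.erase p, (1 - ξ i)) ≠ 0 := fun p =>
      Finset.prod_ne_zero_iff.2 fun i _ => h1p i
    have hperp : ∀ p : Fin (n+1),
        ((∏ i ∈ Finset.univ.erase p, ((t - (1 + t) * ξ p + ξ p * ξ i) / (ξ i - ξ p)))
            * (∏ i ∈ Finset.univ.erase p, ξ i) / (1 - ∏ m, ξ m))
          * (t ^ (n * (n - 1) / 2) / ∏ j : Fin n, (1 - ξ' p j))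
        = (t ^ (n * (n - 1) / 2) / ((1 - ∏ m, ξ m) * ∏ j : Fin (n+1), (1 - ξ j)))
          * ((1 - ξ p) * ∏ i ∈ Finset.univ.erase p,
              (ξ i * (t - (1 + t) * ξ p + ξ p * ξ i) / (ξ i - ξ p))) := by
      intro p
      rw [Finset.prod_congr rfl (fun i (_ : i ∈ Finset.univ.erase p) =>
          mul_div_assoc (ξ i) (t - (1 + t) * ξ p + ξ p * ξ i) (ξ i - ξ p)),
        hresum p (fun x => 1 - x), Finset.prod_mul_distrib,
        show (∏ j : Fin (n+1), (1 - ξ j))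
          = (1 - ξ p) * ∏ i ∈ Finset.univ.erase p, (1 - ξ i) from
          (Finset.mul_prod_erase Finset.univ _ (Finset.mem_univ p)).symm]
      exact alg1 _ _ _ _ _ _ hall (h1p p) (hKP p)
    rw [Finset.sum_congr rfl (fun p (_ : p ∈ Finset.univ) => hperp p), ← Finset.mul_sum,
      key_s5 n t ξ hinj, alg2 _ _ _ _ hall, ← pow_add]
    congr 2
    exact (Nat.triangle_succ n).symm

/-- Tracy–Widom symmetrization identity (step initial data). -/
theorem stmt5 (k : ℕ) (hk : 1 ≤ k) (τ : ℝ) (hτ0 : 0 < τ) (hτ1 : τ < 1)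
    (ξ : Fin k → ℂ) (hξ : ∀ j, ‖ξ j‖ < 1) (hinj : Function.Injective ξ)
    (hprod : ∀ (σ : Equiv.Perm (Fin k)) (m : Fin k),
      (∏ l ∈ Finset.univ.filter (fun l : Fin k => m ≤ l), ξ (σ l)) ≠ 1) :
    ∑ σ : Equiv.Perm (Fin k),
      (∏ p ∈ Finset.univ.filter (fun p : Fin k × Fin k => p.1 < p.2),
        SASEP τ (ξ (σ p.1)) (ξ (σ p.2)) / (ξ (σ p.2) - ξ (σ p.1))) *
      (∏ m : Fin k, ξ (σ m) ^ (m : ℕ)) /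
      (∏ m : Fin k,
        (1 - ∏ l ∈ Finset.univ.filter (fun l : Fin k => m ≤ l), ξ (σ l)))
    = (τ : ℂ) ^ (k * (k - 1) / 2) / ∏ j : Fin k, (1 - ξ j) := by
  have h1 : ∀ A : Finset (Fin k), A.Nonempty → ∏ i ∈ A, ξ i ≠ 1 := by
    intro A hA h
    obtain ⟨a, ha⟩ := hA
    have hle : ∏ i ∈ A.erase a, ‖ξ i‖ ≤ 1 :=
      Finset.prod_le_one (fun i _ => norm_nonneg _) (fun i _ => (hξ i).le)
    have hnorm : ‖∏ i ∈ A, ξ i‖ < 1 := by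
      rw [← Finset.mul_prod_erase A ξ ha, norm_mul, norm_prod]
      calc ‖ξ a‖ * ∏ i ∈ A.erase a, ‖ξ i‖ ≤ ‖ξ a‖ * 1 :=
            mul_le_mul_of_nonneg_left hle (norm_nonneg _)
        _ < 1 := by rw [mul_one]; exact hξ a
    rw [h] at hnorm
    simp at hnorm
  have := mainlem k (τ : ℂ) ξ hinj h1
  simp only [SASEP]
  exact this
end

section
/- The dual Tracy–Widom symmetrization identity: for 0 < τ < 1 and pairwise distinct ξ_1,…,ξ_k with |ξ_j| < 1, ∑_{σ ∈ S(k)} ∏_{B<A} S_ASEP(ξ_{σ(B)}, ξ_{σ(A)})/(ξ_{σ(A)} - ξ_{σ(B)}) · 1/[(1 - ξ_{σ(1)})(1 - ξ_{σ(1)}ξ_{σ(2)})⋯(1 - ξ_{σ(1)}⋯ξ_{σ(k)})] = ∏_{j=1}^k 1/(1 - ξ_j). -/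
open Finset Polynomial

variable {M : Type*} [CommMonoid M]

lemma img_lt (k : ℕ) (u : Fin k) :
    (univ.filter (· < u)).image (Fin.castSucc) = univ.filter (· < Fin.castSucc u) := by
  ext x
  simp only [mem_image, mem_filter, mem_univ, true_and]
  constructor
  · rintro ⟨y, hy, rfl⟩; exact Fin.castSucc_lt_castSucc_iff.mpr hy
  · intro hx
    have hxl : x ≠ Fin.last k := by
      intro h; subst h
      have := Fin.castSucc_lt_last u
      exact absurd hx (by omega)
    obtain ⟨y, rfl⟩ := Fin.exists_castSucc_eq.mpr hxl
    exact ⟨y, Fin.castSucc_lt_castSucc_iff.mp hx, rfl⟩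

lemma img_le (k : ℕ) (u : Fin k) :
    (univ.filter (· ≤ u)).image (Fin.castSucc) = univ.filter (· ≤ Fin.castSucc u) := by
  ext x
  simp only [mem_image, mem_filter, mem_univ, true_and]
  constructor
  · rintro ⟨y, hy, rfl⟩; exact Fin.castSucc_le_castSucc_iff.mpr hy
  · intro hx
    have hxl : x ≠ Fin.last k := by
      intro h; subst h
      have := Fin.castSucc_lt_last u
      exact absurd (lt_of_le_of_lt hx this) (lt_irrefl _)
    obtain ⟨y, rfl⟩ := Fin.exists_castSucc_eq.mpr hxl
    exact ⟨y, Fin.castSucc_le_castSucc_iff.mp hx, rfl⟩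

lemma img_gt (k : ℕ) (u : Fin k) :
    univ.filter (Fin.castSucc u < ·) =
      insert (Fin.last k) ((univ.filter (u < ·)).image (Fin.castSucc)) := by
  ext x
  simp only [mem_insert, mem_image, mem_filter, mem_univ, true_and]
  constructor
  · intro hx
    rcases eq_or_ne x (Fin.last k) with h | h
    · exact Or.inl h
    · obtain ⟨y, rfl⟩ := Fin.exists_castSucc_eq.mpr h
      exact Or.inr ⟨y, Fin.castSucc_lt_castSucc_iff.mp hx, rfl⟩
  · rintro (rfl | ⟨y, hy, rfl⟩)
    · exact Fin.castSucc_lt_last u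
    · exact Fin.castSucc_lt_castSucc_iff.mpr hy

lemma filt_le_last (k : ℕ) : (univ : Finset (Fin (k+1))).filter (· ≤ Fin.last k) = univ := by
  ext x; simp [Fin.le_last]

lemma filt_lt_last (k : ℕ) :
    (univ : Finset (Fin (k+1))).filter (· < Fin.last k) = univ.image Fin.castSucc := by
  ext x
  simp only [mem_filter, mem_univ, true_and, mem_image]
  constructor
  · intro hx
    obtain ⟨y, rfl⟩ := Fin.exists_castSucc_eq.mpr (Fin.ne_last_of_lt hx)
    exact ⟨y, rfl⟩
  · rintro ⟨y, rfl⟩; exact Fin.castSucc_lt_last y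

lemma telescope {R : Type*} [CommRing R] (k : ℕ) (f g : Fin k → R) :
    (∏ w, f w) - (∏ w, g w) =
      ∑ u, (∏ w ∈ univ.filter (· < u), f w) * (f u - g u) * (∏ w ∈ univ.filter (u < ·), g w) := by
  induction k with
  | zero => simp
  | succ n ih =>
    rw [Fin.sum_univ_castSucc, Fin.prod_univ_castSucc f, Fin.prod_univ_castSucc g]
    have h1 : ∀ u : Fin n,
        (∏ w ∈ univ.filter (· < Fin.castSucc u), f w) = ∏ w ∈ univ.filter (· < u), f w.castSucc := by
      intro u; rw [← img_lt, prod_image (by intros a _ b _ h; exact Fin.castSucc_injective _ h)]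
    have h2 : ∀ u : Fin n,
        (∏ w ∈ univ.filter (Fin.castSucc u < ·), g w) =
          g (Fin.last n) * ∏ w ∈ univ.filter (u < ·), g w.castSucc := by
      intro u
      rw [img_gt, prod_insert, prod_image (by intros a _ b _ h; exact Fin.castSucc_injective _ h)]
      simp only [mem_image, mem_filter]
      rintro ⟨y, -, hy⟩
      exact (Fin.castSucc_lt_last y).ne hy
    have h3 : (univ : Finset (Fin (n+1))).filter (· < Fin.last n) = univ.image Fin.castSucc :=
      filt_lt_last n
    have h4 : (univ : Finset (Fin (n+1))).filter (Fin.last n < ·) = ∅ := by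
      ext x; simp [Fin.le_last x, not_lt.mpr (Fin.le_last x)]
    calc (∏ w : Fin n, f w.castSucc) * f (Fin.last n) - (∏ w : Fin n, g w.castSucc) * g (Fin.last n)
        = ((∏ w : Fin n, f w.castSucc) - (∏ w : Fin n, g w.castSucc)) * g (Fin.last n) +
          (∏ w : Fin n, f w.castSucc) * (f (Fin.last n) - g (Fin.last n)) := by ring
      _ = _ := by
        rw [ih (fun w => f w.castSucc) (fun w => g w.castSucc)]
        rw [Finset.sum_mul]
        congr 1
        · refine Finset.sum_congr rfl fun u _ => ?_
          rw [h1, h2]; ring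
        · rw [h3, prod_image (by intros a _ b _ h; exact Fin.castSucc_injective _ h), h4]
          simp [mul_comm]


lemma filter_lt_union_gt {k : ℕ} (u : Fin k) :
    (univ.filter (· < u)) ∪ (univ.filter (u < ·)) = univ.erase u := by
  ext x
  simp only [mem_union, mem_filter, mem_univ, true_and, mem_erase]
  constructor
  · rintro (h | h)
    · exact ⟨h.ne, trivial⟩
    · exact ⟨h.ne', trivial⟩
  · rintro ⟨h, -⟩; exact h.lt_or_gt

lemma disj_lt_gt {k : ℕ} (u : Fin k) :
    Disjoint (univ.filter (· < u)) (univ.filter (u < ·)) := by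
  rw [Finset.disjoint_left]
  intro a ha hb
  simp only [mem_filter] at ha hb
  exact absurd (ha.2.trans hb.2) (lt_irrefl _)

/-- The interpolating polynomial. -/
noncomputable def Fpoly (k : ℕ) (τ : ℝ) (ξ : Fin k → ℂ) : ℂ[X] :=
  ∑ u, C (1 - ξ u) * ((∏ w ∈ univ.filter (· < u), (X - C (ξ w))) *
    (∏ w ∈ univ.filter (u < ·), (C (ξ w) * X + C ((τ:ℂ) - (1+(τ:ℂ)) * ξ w))))

lemma eval_Fpoly (k : ℕ) (τ : ℝ) (ξ : Fin k → ℂ) (z : ℂ) :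
    (Fpoly k τ ξ).eval z = ∑ u, (1 - ξ u) * ((∏ w ∈ univ.filter (· < u), (z - ξ w)) *
      (∏ w ∈ univ.filter (u < ·), SASEP τ (ξ w) z)) := by
  simp only [Fpoly, eval_finset_sum, eval_mul, eval_C, eval_prod, eval_sub, eval_X, eval_add]
  refine Finset.sum_congr rfl fun u _ => ?_
  congr 1
  congr 1
  refine Finset.prod_congr rfl fun w _ => ?_
  simp [SASEP]; ring

lemma natDegree_Fpoly_le (k : ℕ) (τ : ℝ) (ξ : Fin k → ℂ) :
    (Fpoly k τ ξ).natDegree ≤ k - 1 := by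
  refine (natDegree_sum_le _ _).trans ?_
  rw [Finset.fold_max_le]
  refine ⟨Nat.zero_le _, fun u _ => ?_⟩
  simp only [Function.comp_apply]
  refine (natDegree_mul_le).trans ?_
  have h1 : (∏ w ∈ univ.filter (· < u), (X - C (ξ w))).natDegree ≤ #(univ.filter (· < u)) := by
    refine (natDegree_prod_le _ _).trans ?_
    rw [Finset.card_eq_sum_ones]
    exact Finset.sum_le_sum fun w _ => natDegree_X_sub_C_le _
  have h2 : (∏ w ∈ univ.filter (u < ·), (C (ξ w) * X + C ((τ:ℂ) - (1+(τ:ℂ)) * ξ w))).natDegree ≤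
      #(univ.filter (u < ·)) := by
    refine (natDegree_prod_le _ _).trans ?_
    rw [Finset.card_eq_sum_ones]
    exact Finset.sum_le_sum fun w _ => natDegree_linear_le
  have hcard : #(univ.filter (· < u)) + #(univ.filter (u < ·)) = k - 1 := by
    rw [← Finset.card_union_of_disjoint (disj_lt_gt u), filter_lt_union_gt,
      Finset.card_erase_of_mem (mem_univ u), Finset.card_univ, Fintype.card_fin]
  have := add_le_add h1 h2
  rw [hcard] at this
  calc (C (1 - ξ u)).natDegree + _ ≤ 0 + (k - 1) :=
        add_le_add (natDegree_C _).le ((natDegree_mul_le).trans this)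
    _ = k - 1 := by omega

lemma coeff_Fpoly (k : ℕ) (τ : ℝ) (ξ : Fin k → ℂ) :
    (Fpoly k τ ξ).coeff (k - 1) = 1 - ∏ j, ξ j := by
  classical
  have hL : ∀ u : Fin k,
      (∏ w ∈ univ.filter (· < u), (X - C (ξ w))) *
        (∏ w ∈ univ.filter (u < ·), (C (ξ w) * X + C ((τ:ℂ) - (1+(τ:ℂ)) * ξ w))) =
      ∏ w ∈ univ.erase u,
        (if w < u then X - C (ξ w) else C (ξ w) * X + C ((τ:ℂ) - (1+(τ:ℂ)) * ξ w)) := by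
    intro u
    rw [← filter_lt_union_gt u, prod_union (disj_lt_gt u)]
    congr 1
    · refine prod_congr rfl fun w hw => ?_
      rw [if_pos (mem_filter.mp hw).2]
    · refine prod_congr rfl fun w hw => ?_
      rw [if_neg (not_lt.mpr (le_of_lt (mem_filter.mp hw).2))]
  have hcard : ∀ u : Fin k, #(univ.erase u) = k - 1 := fun u => by
    rw [Finset.card_erase_of_mem (mem_univ u), Finset.card_univ, Fintype.card_fin]
  rw [Fpoly, finset_sum_coeff]
  have hterm : ∀ u : Fin k,
      (C (1 - ξ u) * ((∏ w ∈ univ.filter (· < u), (X - C (ξ w))) *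
        (∏ w ∈ univ.filter (u < ·), (C (ξ w) * X + C ((τ:ℂ) - (1+(τ:ℂ)) * ξ w))))).coeff (k-1)
      = (1 - ξ u) * ∏ w ∈ univ.filter (u < ·), ξ w := by
    intro u
    rw [hL u, coeff_C_mul]
    have h1 : (k - 1) = #(univ.erase u) * 1 := by rw [hcard u, mul_one]
    rw [h1, coeff_prod_of_natDegree_le]
    · congr 1
      rw [← filter_lt_union_gt u, prod_union (disj_lt_gt u)]
      have e1 : ∏ w ∈ univ.filter (· < u),
          (if w < u then X - C (ξ w) else C (ξ w) * X + C ((τ:ℂ) - (1+(τ:ℂ)) * ξ w)).coeff 1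
          = 1 := by
        refine prod_eq_one fun w hw => ?_
        rw [if_pos (mem_filter.mp hw).2]
        simp
      have e2 : ∏ w ∈ univ.filter (u < ·),
          (if w < u then X - C (ξ w) else C (ξ w) * X + C ((τ:ℂ) - (1+(τ:ℂ)) * ξ w)).coeff 1
          = ∏ w ∈ univ.filter (u < ·), ξ w := by
        refine prod_congr rfl fun w hw => ?_
        rw [if_neg (not_lt.mpr (le_of_lt (mem_filter.mp hw).2))]
        rw [coeff_add, coeff_C_mul, coeff_X_one, coeff_C]
        norm_num
      rw [e1, e2, one_mul]
    · intro w hw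
      split_ifs with h
      · exact (natDegree_X_sub_C _).le
      · exact natDegree_linear_le
  rw [Finset.sum_congr rfl fun u _ => hterm u]
  have := telescope k (fun _ => (1:ℂ)) ξ
  simp only [prod_const_one, one_mul, mul_one, Finset.prod_const_one] at this
  rw [this]

lemma SASEP_self (τ : ℝ) (x : ℂ) : SASEP τ x x = (1 - x) * ((τ:ℂ) - x) := by
  simp [SASEP]; ring

lemma eval_Fpoly_node (k : ℕ) (τ : ℝ) (ξ : Fin k → ℂ) (hinj : Function.Injective ξ) (v : Fin k) :
    (Fpoly k τ ξ).eval (ξ v) = (1 - ξ v) * ∏ w ∈ univ.erase v, SASEP τ (ξ w) (ξ v) := by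
  classical
  rw [eval_Fpoly]
  have hprodS : ∏ w, SASEP τ (ξ w) (ξ v)
      = SASEP τ (ξ v) (ξ v) * ∏ w ∈ univ.erase v, SASEP τ (ξ w) (ξ v) :=
    (Finset.mul_prod_erase univ _ (mem_univ v)).symm
  by_cases hτv : ξ v = (τ : ℂ)
  · -- only the u = v term survives
    rw [Finset.sum_eq_single v]
    · have hS : ∀ w : Fin k, SASEP τ (ξ w) (ξ v) = ξ v - ξ w := by
        intro w; rw [SASEP, hτv]; ring
      have : (∏ w ∈ univ.filter (· < v), (ξ v - ξ w))
          = ∏ w ∈ univ.filter (· < v), SASEP τ (ξ w) (ξ v) := by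
        refine prod_congr rfl fun w _ => (hS w).symm
      rw [this, ← Finset.prod_union (disj_lt_gt v), filter_lt_union_gt]
    · intro u _ huv
      rcases huv.lt_or_gt with h | h
      · -- u < v : factor w = v in the right product vanishes
        have : ∏ w ∈ univ.filter (u < ·), SASEP τ (ξ w) (ξ v) = 0 := by
          refine Finset.prod_eq_zero (mem_filter.mpr ⟨mem_univ v, h⟩) ?_
          rw [SASEP_self, hτv]; ring
        rw [this]; ring
      · -- v < u : factor w = v in the left product vanishes
        have : ∏ w ∈ univ.filter (· < u), (ξ v - ξ w) = 0 := by
          refine Finset.prod_eq_zero (mem_filter.mpr ⟨mem_univ v, h⟩) ?_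
          ring
        rw [this]; ring
    · intro h; exact absurd (mem_univ v) h
  · -- generic case, via telescoping
    have hsub : (ξ v - (τ:ℂ)) ≠ 0 := sub_ne_zero.mpr hτv
    refine mul_left_cancel₀ hsub ?_
    have h := telescope k (fun w => ξ v - ξ w) (fun w => SASEP τ (ξ w) (ξ v))
    have hmid : ∀ u : Fin k, (ξ v - ξ u) - SASEP τ (ξ u) (ξ v) = (ξ v - (τ:ℂ)) * (1 - ξ u) := by
      intro u; rw [SASEP]; ring
    simp only [hmid] at h
    have hzero : ∏ w, (ξ v - ξ w) = 0 :=
      Finset.prod_eq_zero (mem_univ v) (by ring)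
    rw [hzero, zero_sub, hprodS, SASEP_self] at h
    rw [mul_sum]
    calc ∑ u, (ξ v - (τ:ℂ)) * ((1 - ξ u) * ((∏ w ∈ univ.filter (· < u), (ξ v - ξ w)) *
          (∏ w ∈ univ.filter (u < ·), SASEP τ (ξ w) (ξ v))))
        = ∑ u, (∏ w ∈ univ.filter (· < u), (ξ v - ξ w)) * ((ξ v - (τ:ℂ)) * (1 - ξ u)) *
          (∏ w ∈ univ.filter (u < ·), SASEP τ (ξ w) (ξ v)) := by
          refine Finset.sum_congr rfl fun u _ => ?_; ring
      _ = -((1 - ξ v) * ((τ:ℂ) - ξ v) * ∏ w ∈ univ.erase v, SASEP τ (ξ w) (ξ v)) := h.symm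
      _ = (ξ v - (τ:ℂ)) * ((1 - ξ v) * ∏ w ∈ univ.erase v, SASEP τ (ξ w) (ξ v)) := by ring

lemma coeff_basis {n : ℕ} (ξ : Fin (n+1) → ℂ) (hinj : Function.Injective ξ) (i : Fin (n+1)) :
    (Lagrange.basis univ ξ i).coeff n = (∏ j ∈ univ.erase i, (ξ i - ξ j))⁻¹ := by
  classical
  have hC : Lagrange.basis univ ξ i
      = C ((∏ j ∈ univ.erase i, (ξ i - ξ j))⁻¹) * ∏ j ∈ univ.erase i, (X - C (ξ j)) := by
    rw [Lagrange.basis]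
    simp_rw [Lagrange.basisDivisor]
    rw [prod_mul_distrib, ← Finset.prod_inv_distrib, map_prod]
  rw [hC, coeff_C_mul]
  have hmon : (∏ j ∈ univ.erase i, (X - C (ξ j))).Monic :=
    monic_prod_of_monic _ _ fun j _ => monic_X_sub_C _
  have hdeg : (∏ j ∈ univ.erase i, (X - C (ξ j))).natDegree = n := by
    rw [natDegree_prod _ _ fun j _ => X_sub_C_ne_zero _]
    simp [natDegree_X_sub_C, Finset.card_erase_of_mem]
  have h1 := hmon.coeff_natDegree
  rw [hdeg] at h1
  rw [h1, mul_one]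

lemma starE (n : ℕ) (τ : ℝ) (ξ : Fin (n+1) → ℂ) (hinj : Function.Injective ξ) :
    ∑ v, (1 - ξ v) * ∏ w ∈ univ.erase v, (SASEP τ (ξ w) (ξ v) / (ξ v - ξ w))
      = 1 - ∏ j, ξ j := by
  classical
  have hvs : Set.InjOn ξ (univ : Finset (Fin (n+1))) := fun a _ b _ h => hinj h
  have hdeg : (Fpoly (n+1) τ ξ).degree < (#(univ : Finset (Fin (n+1))) : ℕ) := by
    rcases eq_or_ne (Fpoly (n+1) τ ξ) 0 with h0 | h0
    · rw [h0, degree_zero]; exact WithBot.bot_lt_coe _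
    · rw [degree_eq_natDegree h0]
      have := natDegree_Fpoly_le (n+1) τ ξ
      rw [Finset.card_univ, Fintype.card_fin]
      exact_mod_cast lt_of_le_of_lt this (by omega)
  have hinterp := Lagrange.eq_interpolate hvs hdeg
  have hco := congrArg (fun p => p.coeff n) hinterp
  simp only [Lagrange.interpolate_apply, finset_sum_coeff, coeff_C_mul] at hco
  have hc : (Fpoly (n+1) τ ξ).coeff n = 1 - ∏ j, ξ j := by
    have := coeff_Fpoly (n+1) τ ξ
    simpa using this
  rw [hc] at hco
  rw [hco]
  refine Finset.sum_congr rfl fun v _ => ?_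
  rw [coeff_basis ξ hinj v, eval_Fpoly_node _ _ _ hinj v, Finset.prod_div_distrib,
    div_eq_mul_inv]
  ring

lemma image_succAbove_univ {n : ℕ} (v : Fin (n+1)) :
    (univ : Finset (Fin n)).image v.succAbove = univ.erase v := by
  ext x
  simp only [mem_image, mem_univ, true_and, mem_erase, and_true]
  rw [Fin.exists_succAbove_eq_iff]

lemma prod_succAbove {n : ℕ} (v : Fin (n+1)) (h : Fin (n+1) → ℂ) :
    ∏ w : Fin n, h (v.succAbove w) = ∏ w ∈ univ.erase v, h w := by
  rw [← image_succAbove_univ v,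
    prod_image (fun a _ b _ hab => Fin.succAbove_right_injective hab)]

lemma starSA (n : ℕ) (τ : ℝ) (ξ : Fin (n+1) → ℂ) (hinj : Function.Injective ξ) :
    ∑ v, (1 - ξ v) *
      ∏ w : Fin n, (SASEP τ (ξ (v.succAbove w)) (ξ v) / (ξ v - ξ (v.succAbove w)))
      = 1 - ∏ j, ξ j := by
  rw [← starE n τ ξ hinj]
  refine Finset.sum_congr rfl fun v _ => ?_
  rw [prod_succAbove v (fun w => SASEP τ (ξ w) (ξ v) / (ξ v - ξ w))]

/-- Insert `v` at the last position: the permutation sending `last ↦ v`,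
`castSucc i ↦ v.succAbove (π i)`. -/
def EPerm {n : ℕ} (v : Fin (n+1)) (π : Equiv.Perm (Fin n)) : Equiv.Perm (Fin (n+1)) :=
  finSuccEquivLast.trans ((π.optionCongr).trans (finSuccEquiv' v).symm)

@[simp] lemma EPerm_last {n : ℕ} (v : Fin (n+1)) (π : Equiv.Perm (Fin n)) :
    EPerm v π (Fin.last n) = v := by
  simp [EPerm]

@[simp] lemma EPerm_castSucc {n : ℕ} (v : Fin (n+1)) (π : Equiv.Perm (Fin n)) (i : Fin n) :
    EPerm v π (Fin.castSucc i) = v.succAbove (π i) := by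
  simp [EPerm]

lemma EPerm_bij {n : ℕ} :
    Function.Bijective (fun p : Fin (n+1) × Equiv.Perm (Fin n) => EPerm p.1 p.2) := by
  rw [Fintype.bijective_iff_injective_and_card]
  constructor
  · rintro ⟨v, π⟩ ⟨v', π'⟩ h
    simp only at h
    have hv : v = v' := by
      have := congrArg (fun σ : Equiv.Perm (Fin (n+1)) => σ (Fin.last n)) h
      simpa using this
    subst hv
    have hπ : π = π' := by
      refine Equiv.ext fun i => ?_
      have := congrArg (fun σ : Equiv.Perm (Fin (n+1)) => σ (Fin.castSucc i)) h
      simp only [EPerm_castSucc] at this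
      exact Fin.succAbove_right_injective this
    rw [hπ]
  · simp [Fintype.card_perm, Nat.factorial_succ]

lemma pairNest {m : ℕ} (h : Fin m → Fin m → ℂ) :
    ∏ p ∈ (univ : Finset (Fin m × Fin m)).filter (fun p => p.1 < p.2), h p.1 p.2
      = ∏ c : Fin m, ∏ a ∈ univ.filter (· < c), h a c := by
  rw [Finset.prod_finset_product_right' _ univ (fun c => univ.filter (· < c))
    (fun p => by simp)]

lemma pairSplit {n : ℕ} (g : Fin (n+1) → Fin (n+1) → ℂ) :
    ∏ p ∈ (univ : Finset (Fin (n+1) × Fin (n+1))).filter (fun p => p.1 < p.2), g p.1 p.2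
    = (∏ p ∈ (univ : Finset (Fin n × Fin n)).filter (fun p => p.1 < p.2),
        g p.1.castSucc p.2.castSucc) * ∏ i : Fin n, g i.castSucc (Fin.last n) := by
  rw [pairNest, Fin.prod_univ_castSucc]
  congr 1
  · rw [pairNest (fun a b => g a.castSucc b.castSucc)]
    refine Finset.prod_congr rfl fun c _ => ?_
    rw [← img_lt, prod_image (fun a _ b _ hab => Fin.castSucc_injective _ hab)]
  · rw [filt_lt_last, prod_image (fun a _ b _ hab => Fin.castSucc_injective _ hab)]

lemma prefix_castSucc {n : ℕ} (ξ : Fin (n+1) → ℂ) (v : Fin (n+1)) (π : Equiv.Perm (Fin n))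
    (m : Fin n) :
    ∏ l ∈ univ.filter (fun l : Fin (n+1) => l ≤ m.castSucc), ξ (EPerm v π l)
      = ∏ l ∈ univ.filter (fun l : Fin n => l ≤ m), ξ (v.succAbove (π l)) := by
  rw [← img_le, prod_image (fun a _ b _ hab => Fin.castSucc_injective _ hab)]
  exact Finset.prod_congr rfl fun l _ => by rw [EPerm_castSucc]

lemma prefix_last {n : ℕ} (ξ : Fin (n+1) → ℂ) (σ : Equiv.Perm (Fin (n+1))) :
    ∏ l ∈ univ.filter (fun l : Fin (n+1) => l ≤ Fin.last n), ξ (σ l) = ∏ j, ξ j := by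
  rw [filt_le_last]
  exact Equiv.prod_comp σ ξ

theorem aux (k : ℕ) (τ : ℝ) (ξ : Fin k → ℂ) (hne1 : ∀ j, ξ j ≠ 1)
    (hinj : Function.Injective ξ)
    (hprod : ∀ (σ : Equiv.Perm (Fin k)) (m : Fin k),
      (∏ l ∈ Finset.univ.filter (fun l : Fin k => l ≤ m), ξ (σ l)) ≠ 1) :
    ∑ σ : Equiv.Perm (Fin k),
      (∏ p ∈ Finset.univ.filter (fun p : Fin k × Fin k => p.1 < p.2),
        SASEP τ (ξ (σ p.1)) (ξ (σ p.2)) / (ξ (σ p.2) - ξ (σ p.1))) *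
      (1 / ∏ m : Fin k,
        (1 - ∏ l ∈ Finset.univ.filter (fun l : Fin k => l ≤ m), ξ (σ l)))
    = ∏ j : Fin k, 1 / (1 - ξ j) := by
  induction k with
  | zero => simp
  | succ n ih =>
    have hP : (∏ j, ξ j) ≠ 1 := by
      have h := hprod 1 (Fin.last n)
      rwa [prefix_last ξ 1] at h
    have hP0 : (1 - ∏ j, ξ j) ≠ 0 := sub_ne_zero.mpr (Ne.symm hP)
    rw [← Fintype.sum_bijective _ EPerm_bij _ _ (fun p => rfl), Fintype.sum_prod_type]
    -- summand computation
    have hsummand : ∀ (v : Fin (n+1)) (π : Equiv.Perm (Fin n)),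
        (∏ p ∈ Finset.univ.filter (fun p : Fin (n+1) × Fin (n+1) => p.1 < p.2),
          SASEP τ (ξ (EPerm v π p.1)) (ξ (EPerm v π p.2)) /
            (ξ (EPerm v π p.2) - ξ (EPerm v π p.1))) *
        (1 / ∏ m : Fin (n+1),
          (1 - ∏ l ∈ Finset.univ.filter (fun l : Fin (n+1) => l ≤ m), ξ (EPerm v π l)))
        = ((∏ p ∈ Finset.univ.filter (fun p : Fin n × Fin n => p.1 < p.2),
            SASEP τ ((ξ ∘ v.succAbove) (π p.1)) ((ξ ∘ v.succAbove) (π p.2)) /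
              ((ξ ∘ v.succAbove) (π p.2) - (ξ ∘ v.succAbove) (π p.1))) *
          (1 / ∏ m : Fin n,
            (1 - ∏ l ∈ Finset.univ.filter (fun l : Fin n => l ≤ m),
              (ξ ∘ v.succAbove) (π l)))) *
          ((∏ i : Fin n, SASEP τ (ξ (v.succAbove i)) (ξ v) / (ξ v - ξ (v.succAbove i))) *
            (1 / (1 - ∏ j, ξ j))) := by
      intro v π
      have hA := pairSplit (fun a b => SASEP τ (ξ (EPerm v π a)) (ξ (EPerm v π b)) /
        (ξ (EPerm v π b) - ξ (EPerm v π a)))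
      simp only [EPerm_castSucc, EPerm_last] at hA
      have hcross : (∏ i : Fin n, SASEP τ (ξ (v.succAbove (π i))) (ξ v) /
          (ξ v - ξ (v.succAbove (π i))))
          = ∏ i : Fin n, SASEP τ (ξ (v.succAbove i)) (ξ v) / (ξ v - ξ (v.succAbove i)) :=
        Equiv.prod_comp π (fun i => SASEP τ (ξ (v.succAbove i)) (ξ v) /
          (ξ v - ξ (v.succAbove i)))
      have hB : (∏ m : Fin (n+1),
          (1 - ∏ l ∈ Finset.univ.filter (fun l : Fin (n+1) => l ≤ m), ξ (EPerm v π l)))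
          = (∏ m : Fin n, (1 - ∏ l ∈ Finset.univ.filter (fun l : Fin n => l ≤ m),
              (ξ ∘ v.succAbove) (π l))) * (1 - ∏ j, ξ j) := by
        rw [Fin.prod_univ_castSucc]
        congr 1
        · refine Finset.prod_congr rfl fun m _ => ?_
          rw [prefix_castSucc]
          rfl
        · rw [prefix_last]
      rw [hA, hcross, hB]
      rw [show ∀ a b : ℂ, (1:ℂ) / (a * b) = (1/a) * (1/b) from
        fun a b => by rw [div_mul_div_comm, one_mul]]
      simp only [Function.comp_apply]
      ring
    rw [Finset.sum_congr rfl (fun v _ => Finset.sum_congr rfl (fun π _ => hsummand v π))]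
    -- inner sums via ih
    have hinner : ∀ v : Fin (n+1),
        ∑ π : Equiv.Perm (Fin n),
          ((∏ p ∈ Finset.univ.filter (fun p : Fin n × Fin n => p.1 < p.2),
            SASEP τ ((ξ ∘ v.succAbove) (π p.1)) ((ξ ∘ v.succAbove) (π p.2)) /
              ((ξ ∘ v.succAbove) (π p.2) - (ξ ∘ v.succAbove) (π p.1))) *
          (1 / ∏ m : Fin n,
            (1 - ∏ l ∈ Finset.univ.filter (fun l : Fin n => l ≤ m),
              (ξ ∘ v.succAbove) (π l))))
        = ∏ w : Fin n, 1 / (1 - (ξ ∘ v.succAbove) w) := by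
      intro v
      refine ih (ξ ∘ v.succAbove) (fun w => hne1 _)
        (hinj.comp Fin.succAbove_right_injective) ?_
      intro π m
      have h := hprod (EPerm v π) m.castSucc
      rwa [prefix_castSucc] at h
    have hstep : ∀ v : Fin (n+1),
        ∑ π : Equiv.Perm (Fin n),
          ((∏ p ∈ Finset.univ.filter (fun p : Fin n × Fin n => p.1 < p.2),
            SASEP τ ((ξ ∘ v.succAbove) (π p.1)) ((ξ ∘ v.succAbove) (π p.2)) /
              ((ξ ∘ v.succAbove) (π p.2) - (ξ ∘ v.succAbove) (π p.1))) *
          (1 / ∏ m : Fin n,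
            (1 - ∏ l ∈ Finset.univ.filter (fun l : Fin n => l ≤ m),
              (ξ ∘ v.succAbove) (π l)))) *
          ((∏ i : Fin n, SASEP τ (ξ (v.succAbove i)) (ξ v) / (ξ v - ξ (v.succAbove i))) *
            (1 / (1 - ∏ j, ξ j)))
        = ((1 - ξ v) *
            ∏ i : Fin n, SASEP τ (ξ (v.succAbove i)) (ξ v) / (ξ v - ξ (v.succAbove i))) *
          ((∏ j, 1 / (1 - ξ j)) * (1 / (1 - ∏ j, ξ j))) := by
      intro v
      rw [← Finset.sum_mul, hinner v]
      have hXv : (∏ w : Fin n, 1 / (1 - (ξ ∘ v.succAbove) w))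
          = (1 - ξ v) * ∏ j, 1 / (1 - ξ j) := by
        have hp := Fin.prod_univ_succAbove (fun j => 1 / (1 - ξ j)) v
        have hv0 : (1 - ξ v) ≠ 0 := sub_ne_zero.mpr (Ne.symm (hne1 v))
        rw [hp, ← mul_assoc, mul_one_div, div_self hv0, one_mul]
        rfl
      rw [hXv]
      ring
    rw [Finset.sum_congr rfl (fun v _ => hstep v)]
    rw [← Finset.sum_mul, starSA n τ ξ hinj]
    rw [← mul_assoc, mul_comm (1 - ∏ j, ξ j), mul_assoc, mul_one_div, div_self hP0, mul_one]

/-- Dual Tracy–Widom symmetrization identity. -/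
theorem stmt6 (k : ℕ) (hk : 1 ≤ k) (τ : ℝ) (hτ0 : 0 < τ) (hτ1 : τ < 1)
    (ξ : Fin k → ℂ) (hξ : ∀ j, ‖ξ j‖ < 1) (hinj : Function.Injective ξ)
    (hprod : ∀ (σ : Equiv.Perm (Fin k)) (m : Fin k),
      (∏ l ∈ Finset.univ.filter (fun l : Fin k => l ≤ m), ξ (σ l)) ≠ 1) :
    ∑ σ : Equiv.Perm (Fin k),
      (∏ p ∈ Finset.univ.filter (fun p : Fin k × Fin k => p.1 < p.2),
        SASEP τ (ξ (σ p.1)) (ξ (σ p.2)) / (ξ (σ p.2) - ξ (σ p.1))) *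
      (1 / ∏ m : Fin k,
        (1 - ∏ l ∈ Finset.univ.filter (fun l : Fin k => l ≤ m), ξ (σ l)))
    = ∏ j : Fin k, 1 / (1 - ξ j) := by
  refine aux k τ ξ (fun j h => ?_) hinj hprod
  have := hξ j
  rw [h] at this
  simp at this
end

section
/- If the random variable X takes values in {0,1,2,…} with ℙ(X = n) = ρ^n (ν;q)_n/(q;q)_n · (ρ;q)_∞/(ρν;q)_∞, then for every integer m ≥ 0 with ρ < q^m one has 𝔼[q^{-mX}] = ∏_{j=1}^m (1 - ρν q^{-j})/(1 - ρ q^{-j}). -/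
open Finset Filter Topology Real

namespace QBin

/-- coefficient `(ν;q)_n / (q;q)_n` -/
noncomputable def qc (q ν : ℝ) (n : ℕ) : ℝ :=
  (∏ i ∈ Finset.range n, (1 - ν * q ^ i)) / (∏ i ∈ Finset.range n, (1 - q ^ (i + 1)))

/-- the series `∑ x^n (ν;q)_n/(q;q)_n` -/
noncomputable def qS (q ν x : ℝ) : ℝ := ∑' n : ℕ, x ^ n * qc q ν n

section basic
variable {q ν x : ℝ} (hq0 : 0 < q) (hq1 : q < 1)

include hq0 hq1 in
lemma factor_pos (hx0 : 0 ≤ x) (hx1 : x < 1) (i : ℕ) : 0 < 1 - x * q ^ i := by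
  have h1 : q ^ i ≤ 1 := pow_le_one₀ hq0.le hq1.le
  have h2 : 0 < q ^ i := pow_pos hq0 i
  nlinarith

include hq0 hq1 in
lemma log_summable (hx0 : 0 ≤ x) (hx1 : x < 1) :
    Summable (fun i : ℕ => Real.log (1 - x * q ^ i)) := by
  have hb : Summable (fun i : ℕ => (x / (1 - x)) * q ^ i) :=
    (summable_geometric_of_lt_one hq0.le hq1).mul_left _
  apply Summable.of_norm
  apply hb.of_nonneg_of_le (fun i => norm_nonneg _)
  intro i
  have h2 : 0 < q ^ i := pow_pos hq0 i
  have h3 : q ^ i ≤ 1 := pow_le_one₀ hq0.le hq1.le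
  have hp := factor_pos hq0 hq1 hx0 hx1 i
  have ht : x * q ^ i ≤ x := by nlinarith
  have hlogle : Real.log ((1 - x * q ^ i)⁻¹) ≤ (1 - x * q ^ i)⁻¹ - 1 :=
    Real.log_le_sub_one_of_pos (by positivity)
  rw [Real.log_inv] at hlogle
  have hnorm : ‖Real.log (1 - x * q ^ i)‖ = -Real.log (1 - x * q ^ i) := by
    rw [Real.norm_eq_abs, abs_of_nonpos]
    exact Real.log_nonpos (by nlinarith) (by nlinarith)
  rw [hnorm]
  have h4 : (1 - x * q ^ i)⁻¹ - 1 = (x * q ^ i) / (1 - x * q ^ i) := by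
    field_simp
    ring
  have h5 : (x * q ^ i) / (1 - x * q ^ i) ≤ (x * q ^ i) / (1 - x) := by
    apply div_le_div_of_nonneg_left (by positivity) (by linarith) (by nlinarith)
  have h6 : (x * q ^ i) / (1 - x) = (x / (1 - x)) * q ^ i := by ring
  linarith [hlogle, h4 ▸ hlogle]

include hq0 hq1 in
lemma hasProd_one_sub (hx0 : 0 ≤ x) (hx1 : x < 1) :
    HasProd (fun i : ℕ => 1 - x * q ^ i)
      (Real.exp (∑' i : ℕ, Real.log (1 - x * q ^ i))) := by
  have h := (log_summable hq0 hq1 hx0 hx1).hasSum.rexp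
  have he : (rexp ∘ fun i : ℕ => Real.log (1 - x * q ^ i)) = fun i : ℕ => 1 - x * q ^ i := by
    funext i
    exact Real.exp_log (factor_pos hq0 hq1 hx0 hx1 i)
  rwa [he] at h

include hq0 hq1 in
lemma multipliable_one_sub (hx0 : 0 ≤ x) (hx1 : x < 1) :
    Multipliable (fun i : ℕ => 1 - x * q ^ i) :=
  (hasProd_one_sub hq0 hq1 hx0 hx1).multipliable

include hq0 hq1 in
lemma tprod_pos (hx0 : 0 ≤ x) (hx1 : x < 1) :
    0 < ∏' i : ℕ, (1 - x * q ^ i) := by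
  rw [(hasProd_one_sub hq0 hq1 hx0 hx1).tprod_eq]
  exact Real.exp_pos _

include hq0 hq1 in
lemma tendsto_partial_prod (hx0 : 0 ≤ x) (hx1 : x < 1) :
    Tendsto (fun k => ∏ i ∈ range k, (1 - x * q ^ i)) atTop
      (𝓝 (∏' i : ℕ, (1 - x * q ^ i))) := by
  have := (multipliable_one_sub hq0 hq1 hx0 hx1).hasProd
  exact this.tendsto_prod_nat

end basic

section bd

variable {q ν : ℝ} (hq0 : 0 < q) (hq1 : q < 1)

/-- uniform positive lower bound for the partial products `(q;q)_n` -/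
noncomputable def Dq (q : ℝ) : ℝ := Real.exp (∑' i : ℕ, Real.log (1 - q * q ^ i))

include hq0 hq1 in
lemma den_pos (n : ℕ) : 0 < ∏ i ∈ range n, (1 - q ^ (i + 1)) := by
  apply Finset.prod_pos
  intro i _
  have : q ^ (i + 1) < 1 := pow_lt_one₀ hq0.le hq1 (Nat.succ_ne_zero i)
  linarith

include hq0 hq1 in
lemma Dq_pos : 0 < Dq q := Real.exp_pos _

include hq0 hq1 in
lemma Dq_le (n : ℕ) : Dq q ≤ ∏ i ∈ range n, (1 - q ^ (i + 1)) := by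
  have hsum := (fun i => Real.log (1 - q * q ^ i))
  have hlog : ∀ i : ℕ, 0 < 1 - q * q ^ i := by
    intro i
    have h1 : q ^ i ≤ 1 := pow_le_one₀ hq0.le hq1.le
    have h2 : 0 < q ^ i := pow_pos hq0 i
    nlinarith
  have hprod : ∏ i ∈ range n, (1 - q ^ (i + 1)) =
      Real.exp (∑ i ∈ range n, Real.log (1 - q * q ^ i)) := by
    rw [Real.exp_sum]
    apply Finset.prod_congr rfl
    intro i _
    rw [Real.exp_log (hlog i), pow_succ, mul_comm (q ^ i) q]
  rw [hprod, Dq]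
  apply Real.exp_le_exp.2
  -- tsum ≤ partial sum since terms are nonpositive
  have hs : Summable (fun i : ℕ => Real.log (1 - q * q ^ i)) := by
    have := log_summable hq0 hq1 hq0.le hq1
    exact this
  have hneg : ∀ i : ℕ, Real.log (1 - q * q ^ i) ≤ 0 := by
    intro i
    apply Real.log_nonpos (hlog i).le
    have h2 : 0 < q ^ i := pow_pos hq0 i
    nlinarith
  have := Summable.sum_le_tsum (f := fun i : ℕ => -Real.log (1 - q * q ^ i)) (range n)
    (fun i _ => by simpa using neg_nonneg.2 (hneg i)) hs.neg
  rw [tsum_neg] at this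
  simp only [Finset.sum_neg_distrib] at this
  linarith

variable (hν0 : 0 ≤ ν) (hν1 : ν < 1)

include hq0 hq1 hν0 hν1 in
lemma qc_nonneg (n : ℕ) : 0 ≤ qc q ν n := by
  apply div_nonneg _ (den_pos hq0 hq1 n).le
  apply Finset.prod_nonneg
  intro i _
  have := factor_pos hq0 hq1 hν0 hν1 i
  linarith

include hq0 hq1 hν0 hν1 in
lemma qc_le (n : ℕ) : qc q ν n ≤ (Dq q)⁻¹ := by
  have hnum : ∏ i ∈ range n, (1 - ν * q ^ i) ≤ 1 := by
    apply Finset.prod_le_one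
    · intro i _; linarith [factor_pos hq0 hq1 hν0 hν1 i]
    · intro i _
      have : 0 ≤ ν * q ^ i := by positivity
      linarith
  have hd := den_pos hq0 hq1 n
  have hD := Dq_pos (q := q) hq0 hq1
  have hDle := Dq_le hq0 hq1 n
  rw [qc, div_le_iff₀ hd]
  calc ∏ i ∈ range n, (1 - ν * q ^ i) ≤ 1 := hnum
    _ = (Dq q)⁻¹ * Dq q := by field_simp
    _ ≤ (Dq q)⁻¹ * ∏ i ∈ range n, (1 - q ^ (i + 1)) := by
        apply mul_le_mul_of_nonneg_left hDle (by positivity)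

include hq0 hq1 hν0 hν1 in
lemma qsummable {x : ℝ} (hx0 : 0 ≤ x) (hx1 : x < 1) :
    Summable (fun n : ℕ => x ^ n * qc q ν n) := by
  have hb : Summable (fun n : ℕ => (Dq q)⁻¹ * x ^ n) :=
    (summable_geometric_of_lt_one hx0 hx1).mul_left _
  apply hb.of_nonneg_of_le
  · intro n
    have := qc_nonneg hq0 hq1 hν0 hν1 n
    positivity
  · intro n
    have h1 := qc_le hq0 hq1 hν0 hν1 n
    have h2 : (0:ℝ) ≤ x ^ n := by positivity
    calc x ^ n * qc q ν n ≤ x ^ n * (Dq q)⁻¹ := by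
          exact mul_le_mul_of_nonneg_left h1 h2
      _ = (Dq q)⁻¹ * x ^ n := by ring

include hq0 hq1 in
lemma qc_zero : qc q ν 0 = 1 := by simp [qc]

include hq0 hq1 in
lemma qc_rec (n : ℕ) : qc q ν (n + 1) * (1 - q ^ (n + 1)) = qc q ν n * (1 - ν * q ^ n) := by
  have hd := den_pos hq0 hq1 n
  have hd1 : (0:ℝ) < 1 - q ^ (n + 1) := by
    have h : q ^ (n+1) < 1 := pow_lt_one₀ hq0.le hq1 (Nat.succ_ne_zero n); linarith
  rw [qc, qc, Finset.prod_range_succ, Finset.prod_range_succ]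
  field_simp

end bd
section feq
variable {q ν : ℝ} (hq0 : 0 < q) (hq1 : q < 1) (hν0 : 0 ≤ ν) (hν1 : ν < 1)

include hq0 hq1 hν0 hν1 in
lemma qS_feq {x : ℝ} (hx0 : 0 ≤ x) (hx1 : x < 1) :
    (1 - x) * qS q ν x = (1 - ν * x) * qS q ν (q * x) := by
  have hqx0 : 0 ≤ q * x := by positivity
  have hqx1 : q * x < 1 := by nlinarith
  have hs1 : Summable (fun n : ℕ => x ^ n * qc q ν n) := qsummable hq0 hq1 hν0 hν1 hx0 hx1
  have hs2 : Summable (fun n : ℕ => (q * x) ^ n * qc q ν n) :=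
    qsummable hq0 hq1 hν0 hν1 hqx0 hqx1
  set g : ℕ → ℝ := fun n => x ^ n * qc q ν n - (q * x) ^ n * qc q ν n with hg
  have hsg : Summable g := hs1.sub hs2
  have hdiff : qS q ν x - qS q ν (q * x) = ∑' n, g n := by
    rw [qS, qS, ← Summable.tsum_sub hs1 hs2]
  have hzero : ∑' n, g n = g 0 + ∑' n, g (n + 1) := Summable.tsum_eq_zero_add hsg
  have hg0 : g 0 = 0 := by simp [hg]
  have hgs : ∀ n : ℕ, g (n + 1) =
      x * (x ^ n * qc q ν n) - (ν * x) * ((q * x) ^ n * qc q ν n) := by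
    intro n
    have hrec := qc_rec hq0 hq1 (ν := ν) n
    have : g (n + 1) = x ^ (n+1) * (qc q ν (n+1) * (1 - q ^ (n+1))) := by
      simp only [hg, mul_pow]
      ring
    rw [this, hrec, mul_pow]
    ring
  have hsum3 : ∑' n, g (n + 1) = x * qS q ν x - (ν * x) * qS q ν (q * x) := by
    calc ∑' n, g (n + 1)
        = ∑' n, (x * (x ^ n * qc q ν n) - (ν * x) * ((q * x) ^ n * qc q ν n)) := by
          exact tsum_congr hgs
      _ = (∑' n, x * (x ^ n * qc q ν n)) - ∑' n, (ν * x) * ((q * x) ^ n * qc q ν n) :=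
          Summable.tsum_sub (hs1.mul_left x) (hs2.mul_left (ν * x))
      _ = x * qS q ν x - (ν * x) * qS q ν (q * x) := by
          rw [tsum_mul_left, tsum_mul_left, qS, qS]
  have : qS q ν x - qS q ν (q * x) = x * qS q ν x - (ν * x) * qS q ν (q * x) := by
    rw [hdiff, hzero, hg0, hsum3]; ring
  linarith

include hq0 hq1 hν0 hν1 in
lemma qS_iter {x : ℝ} (hx0 : 0 ≤ x) (hx1 : x < 1) (k : ℕ) :
    qS q ν x * ∏ i ∈ range k, (1 - x * q ^ i) =
      qS q ν (q ^ k * x) * ∏ i ∈ range k, (1 - ν * x * q ^ i) := by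
  induction k with
  | zero => simp
  | succ k ih =>
    have hxk0 : 0 ≤ q ^ k * x := by positivity
    have hxk1 : q ^ k * x < 1 := by
      have h1 : q ^ k ≤ 1 := pow_le_one₀ hq0.le hq1.le
      have h2 : 0 < q ^ k := pow_pos hq0 k
      nlinarith
    have hfe := qS_feq hq0 hq1 hν0 hν1 hxk0 hxk1
    rw [Finset.prod_range_succ, Finset.prod_range_succ, ← mul_assoc, ih]
    have hq' : q * (q ^ k * x) = q ^ (k + 1) * x := by ring
    rw [hq'] at hfe
    linear_combination (∏ i ∈ range k, (1 - ν * x * q ^ i)) * hfe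

include hq0 hq1 hν0 hν1 in
lemma qS_one_le {y : ℝ} (hy0 : 0 ≤ y) (hy1 : y < 1) : 1 ≤ qS q ν y := by
  have hs := qsummable hq0 hq1 hν0 hν1 hy0 hy1
  have := Summable.le_tsum hs 0 (fun n _ => by
    have := qc_nonneg hq0 hq1 hν0 hν1 n; positivity)
  simpa [qS, qc_zero (q := q) (ν := ν) hq0 hq1] using this

include hq0 hq1 hν0 hν1 in
lemma qS_le {y : ℝ} (hy0 : 0 ≤ y) (hy1 : y ≤ 1/2) :
    qS q ν y ≤ 1 + y * (2 * (Dq q)⁻¹) := by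
  have hy1' : y < 1 := by linarith
  have hs := qsummable hq0 hq1 hν0 hν1 hy0 hy1'
  have hD := Dq_pos (q := q) hq0 hq1
  rw [qS, Summable.tsum_eq_zero_add hs]
  simp only [pow_zero, one_mul, qc_zero (q := q) (ν := ν) hq0 hq1]
  gcongr 1 + ?_
  have hs' : Summable (fun n : ℕ => y ^ (n+1) * qc q ν (n+1)) := by
    exact (summable_nat_add_iff 1).2 hs
  have hgeom : Summable (fun n : ℕ => (y * (Dq q)⁻¹) * y ^ n) :=
    (summable_geometric_of_lt_one hy0 hy1').mul_left _
  calc ∑' n, y ^ (n+1) * qc q ν (n+1)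
      ≤ ∑' n : ℕ, (y * (Dq q)⁻¹) * y ^ n := by
        apply Summable.tsum_le_tsum _ hs' hgeom
        intro n
        have h1 := qc_le hq0 hq1 hν0 hν1 (n+1)
        have h2 : (0:ℝ) ≤ y ^ n := by positivity
        calc y ^ (n+1) * qc q ν (n+1) ≤ y ^ (n+1) * (Dq q)⁻¹ := by
              exact mul_le_mul_of_nonneg_left h1 (by positivity)
          _ = (y * (Dq q)⁻¹) * y ^ n := by ring
    _ = (y * (Dq q)⁻¹) * (1 - y)⁻¹ := by
        rw [tsum_mul_left, tsum_geometric_of_lt_one hy0 hy1']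
    _ ≤ y * (2 * (Dq q)⁻¹) := by
        have h3 : (1 - y)⁻¹ ≤ 2 := by
          rw [inv_le_comm₀ (by linarith) (by norm_num)]
          linarith
        have h4 : 0 ≤ y * (Dq q)⁻¹ := by positivity
        calc (y * (Dq q)⁻¹) * (1 - y)⁻¹ ≤ (y * (Dq q)⁻¹) * 2 := by
              exact mul_le_mul_of_nonneg_left h3 h4
          _ = y * (2 * (Dq q)⁻¹) := by ring

include hq0 hq1 hν0 hν1 in
lemma qS_tendsto_one {x : ℝ} (hx0 : 0 ≤ x) (hx1 : x < 1) :
    Tendsto (fun k : ℕ => qS q ν (q ^ k * x)) atTop (𝓝 1) := by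
  have hq' : |q| < 1 := by rw [abs_of_pos hq0]; exact hq1
  have hpow : Tendsto (fun k : ℕ => q ^ k * x) atTop (𝓝 0) := by
    simpa using (tendsto_pow_atTop_nhds_zero_of_abs_lt_one hq').mul_const x
  have hub : Tendsto (fun k : ℕ => 1 + (q ^ k * x) * (2 * (Dq q)⁻¹)) atTop (𝓝 1) := by
    have := (hpow.mul_const (2 * (Dq q)⁻¹)).const_add 1
    simpa using this
  have hev : ∀ᶠ k : ℕ in atTop, q ^ k * x ≤ 1/2 := by
    have := hpow.eventually_le_const (show (0:ℝ) < 1/2 by norm_num)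
    exact this
  apply tendsto_of_tendsto_of_tendsto_of_le_of_le' tendsto_const_nhds hub
  · filter_upwards with k
    have h2 : 0 < q ^ k := pow_pos hq0 k
    have h1 : q ^ k ≤ 1 := pow_le_one₀ hq0.le hq1.le
    exact qS_one_le hq0 hq1 hν0 hν1 (by positivity) (by nlinarith)
  · filter_upwards [hev] with k hk
    exact qS_le hq0 hq1 hν0 hν1 (by positivity) hk

include hq0 hq1 hν0 hν1 in
lemma q_binomial {x : ℝ} (hx0 : 0 ≤ x) (hx1 : x < 1) :
    qS q ν x * ∏' i : ℕ, (1 - x * q ^ i) = ∏' i : ℕ, (1 - (ν * x) * q ^ i) := by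
  have hνx0 : 0 ≤ ν * x := by positivity
  have hνx1 : ν * x < 1 := by nlinarith
  have h1 : Tendsto (fun k => qS q ν x * ∏ i ∈ range k, (1 - x * q ^ i)) atTop
      (𝓝 (qS q ν x * ∏' i : ℕ, (1 - x * q ^ i))) :=
    (tendsto_partial_prod hq0 hq1 hx0 hx1).const_mul _
  have h2 : Tendsto (fun k => qS q ν (q ^ k * x) * ∏ i ∈ range k, (1 - (ν * x) * q ^ i)) atTop
      (𝓝 (1 * ∏' i : ℕ, (1 - (ν * x) * q ^ i))) :=
    (qS_tendsto_one hq0 hq1 hν0 hν1 hx0 hx1).mul (tendsto_partial_prod hq0 hq1 hνx0 hνx1)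
  rw [one_mul] at h2
  have heq : (fun k => qS q ν x * ∏ i ∈ range k, (1 - x * q ^ i)) =
      (fun k => qS q ν (q ^ k * x) * ∏ i ∈ range k, (1 - (ν * x) * q ^ i)) := by
    funext k
    rw [qS_iter hq0 hq1 hν0 hν1 hx0 hx1 k]
  rw [heq] at h1
  exact tendsto_nhds_unique h1 h2

end feq

end QBin


open Finset

/-- For `X` distributed as `ℙ(X=n) = ρ^n (ν;q)_n/(q;q)_n · (ρ;q)_∞/(ρν;q)_∞`,
one has `𝔼[q^{-mX}] = ∏_{j=1}^m (1-ρν q^{-j})/(1-ρ q^{-j})` whenever `ρ < q^m`. -/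
theorem stmt7 (q ν ρ : ℝ) (hq0 : 0 < q) (hq1 : q < 1)
    (hν0 : 0 ≤ ν) (hν1 : ν < 1) (hρ0 : 0 ≤ ρ) (hρ1 : ρ < 1)
    (m : ℕ) (hρm : ρ < q ^ m) :
    ∑' n : ℕ,
      (ρ ^ n * (∏ i ∈ Finset.range n, (1 - ν * q ^ i)) /
          (∏ i ∈ Finset.range n, (1 - q ^ (i + 1))) *
        ((∏' i : ℕ, (1 - ρ * q ^ i)) / (∏' i : ℕ, (1 - ρ * ν * q ^ i)))) *
      q ^ (-(m * n : ℤ))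
    = ∏ j ∈ Finset.range m,
        (1 - ρ * ν * q ^ (-(j + 1 : ℤ))) / (1 - ρ * q ^ (-(j + 1 : ℤ))) := by
  have hqm : (0:ℝ) < q ^ m := pow_pos hq0 m
  set x : ℝ := ρ / q ^ m with hxdef
  have hx0 : 0 ≤ x := by positivity
  have hx1 : x < 1 := (div_lt_one hqm).2 hρm
  have hνx0 : 0 ≤ ν * x := by positivity
  have hνx1 : ν * x < 1 := by nlinarith
  have hρν0 : 0 ≤ ρ * ν := by positivity
  have hρν1 : ρ * ν < 1 := by nlinarith
  set Pρ : ℝ := ∏' i : ℕ, (1 - ρ * q ^ i) with hPρ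
  set Pν : ℝ := ∏' i : ℕ, (1 - ρ * ν * q ^ i) with hPν
  -- Step 1: rewrite each term
  have hterm : ∀ n : ℕ,
      (ρ ^ n * (∏ i ∈ Finset.range n, (1 - ν * q ^ i)) /
          (∏ i ∈ Finset.range n, (1 - q ^ (i + 1))) * (Pρ / Pν)) * q ^ (-(m * n : ℤ))
      = (Pρ / Pν) * (x ^ n * QBin.qc q ν n) := by
    intro n
    have hz : q ^ (-(m * n : ℤ)) = ((q ^ m)⁻¹) ^ n := by
      rw [zpow_neg]
      have : ((m : ℤ) * n) = ((m * n : ℕ) : ℤ) := by push_cast; ring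
      rw [this, zpow_natCast, pow_mul, inv_pow]
    have hxn : x ^ n = ρ ^ n * ((q ^ m)⁻¹) ^ n := by
      rw [hxdef, div_eq_mul_inv, mul_pow]
    rw [hz, QBin.qc, hxn]
    ring
  rw [tsum_congr hterm, tsum_mul_left]
  have hqb := QBin.q_binomial hq0 hq1 hν0 hν1 hx0 hx1
  have hTx : (0:ℝ) < ∏' i : ℕ, (1 - x * q ^ i) := QBin.tprod_pos hq0 hq1 hx0 hx1
  have hqS : QBin.qS q ν x =
      (∏' i : ℕ, (1 - (ν * x) * q ^ i)) / (∏' i : ℕ, (1 - x * q ^ i)) := by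
    rw [eq_div_iff hTx.ne']
    exact hqb
  -- Step 3: splitting the products
  have hxxρ : ∀ i : ℕ, x * q ^ (i + m) = ρ * q ^ i := by
    intro i; rw [hxdef, pow_add]; field_simp
  have hxxν : ∀ i : ℕ, (ν * x) * q ^ (i + m) = ρ * ν * q ^ i := by
    intro i; rw [hxdef, pow_add]; field_simp
  have hsplitρ : (∏' i : ℕ, (1 - x * q ^ i)) =
      (∏ i ∈ range m, (1 - x * q ^ i)) * Pρ := by
    have hm : Multipliable (fun i : ℕ => 1 - x * q ^ (i + m)) := by
      have : (fun i : ℕ => 1 - x * q ^ (i + m)) = (fun i : ℕ => 1 - ρ * q ^ i) :=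
        funext fun i => by rw [hxxρ i]
      rw [this]
      exact QBin.multipliable_one_sub hq0 hq1 hρ0 hρ1
    have h := Multipliable.prod_mul_tprod_nat_mul' (f := fun i : ℕ => 1 - x * q ^ i) (k := m) hm
    rw [← h, hPρ]
    congr 1
    exact tprod_congr fun i => by simp only [hxxρ i]
  have hsplitν : (∏' i : ℕ, (1 - (ν * x) * q ^ i)) =
      (∏ i ∈ range m, (1 - ν * x * q ^ i)) * Pν := by
    have hm : Multipliable (fun i : ℕ => 1 - (ν * x) * q ^ (i + m)) := by
      have : (fun i : ℕ => 1 - (ν * x) * q ^ (i + m)) = (fun i : ℕ => 1 - ρ * ν * q ^ i) :=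
        funext fun i => by rw [hxxν i]
      rw [this]
      exact QBin.multipliable_one_sub hq0 hq1 hρν0 hρν1
    have h := Multipliable.prod_mul_tprod_nat_mul' (f := fun i : ℕ => 1 - (ν * x) * q ^ i) (k := m) hm
    rw [← h, hPν]
    congr 1
    exact tprod_congr fun i => by simp only [hxxν i]
  -- Step 4: reflect the finite products
  have hAm : (∏ i ∈ range m, (1 - x * q ^ i)) =
      ∏ j ∈ range m, (1 - ρ * q ^ (-(j + 1 : ℤ))) := by
    rw [← Finset.prod_range_reflect (fun j => 1 - ρ * q ^ (-(j + 1 : ℤ))) m]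
    apply Finset.prod_congr rfl
    intro j hj
    have hjm : j < m := Finset.mem_range.1 hj
    have h1 : ((m - 1 - j : ℕ) : ℤ) + 1 = ((m - j : ℕ) : ℤ) := by
      have : (m - 1 - j : ℕ) + 1 = m - j := by omega
      push_cast [← this]; ring
    have h2 : q ^ (-(((m - 1 - j : ℕ) : ℤ) + 1)) = (q ^ (m - j : ℕ))⁻¹ := by
      rw [h1, zpow_neg, zpow_natCast]
    have h3 : q ^ j * q ^ (m - j : ℕ) = q ^ m := by
      rw [← pow_add]
      congr 1
      omega
    have h4 : x * q ^ j = ρ * (q ^ (m - j : ℕ))⁻¹ := by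
      rw [hxdef]
      have hqmj : (0:ℝ) < q ^ (m - j : ℕ) := pow_pos hq0 _
      field_simp
      rw [mul_comm ρ (q^j)] at *
      nlinarith [h3]
    simp only [h2, ← h4]
  have hBm : (∏ i ∈ range m, (1 - ν * x * q ^ i)) =
      ∏ j ∈ range m, (1 - ρ * ν * q ^ (-(j + 1 : ℤ))) := by
    rw [← Finset.prod_range_reflect (fun j => 1 - ρ * ν * q ^ (-(j + 1 : ℤ))) m]
    apply Finset.prod_congr rfl
    intro j hj
    have hjm : j < m := Finset.mem_range.1 hj
    have h1 : ((m - 1 - j : ℕ) : ℤ) + 1 = ((m - j : ℕ) : ℤ) := by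
      have : (m - 1 - j : ℕ) + 1 = m - j := by omega
      push_cast [← this]; ring
    have h2 : q ^ (-(((m - 1 - j : ℕ) : ℤ) + 1)) = (q ^ (m - j : ℕ))⁻¹ := by
      rw [h1, zpow_neg, zpow_natCast]
    have h3 : q ^ j * q ^ (m - j : ℕ) = q ^ m := by
      rw [← pow_add]
      congr 1
      omega
    have h4 : ν * x * q ^ j = ρ * ν * (q ^ (m - j : ℕ))⁻¹ := by
      rw [hxdef]
      have hqmj : (0:ℝ) < q ^ (m - j : ℕ) := pow_pos hq0 _
      field_simp
      nlinarith [h3]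
    simp only [h2, ← h4]
  -- Step 5: conclude
  have hPρpos : 0 < Pρ := QBin.tprod_pos hq0 hq1 hρ0 hρ1
  have hPνpos : 0 < Pν := QBin.tprod_pos hq0 hq1 hρν0 hρν1
  have hAmpos : 0 < ∏ i ∈ range m, (1 - x * q ^ i) :=
    Finset.prod_pos (fun i _ => QBin.factor_pos hq0 hq1 hx0 hx1 i)
  rw [show (∑' n : ℕ, x ^ n * QBin.qc q ν n) = QBin.qS q ν x from rfl]
  rw [hqS, hsplitρ, hsplitν, Finset.prod_div_distrib, ← hAm, ← hBm]
  field_simp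
end

section
/- The ASEP eigenfunction Ψ^ASEP_z(x) = ∑_{σ ∈ S(k)} ∏_{B<A} (z_{σ(B)} - τ z_{σ(A)})/(z_{σ(B)} - z_{σ(A)}) ∏_{j=1}^k ((1 + z_{σ(j)})/(1 + z_{σ(j)}/τ))^{-x_j}, viewed as a function of x ∈ ℤ^k, satisfies the ASEP two-body boundary conditions: for each 1 ≤ i ≤ k-1 and each x ∈ ℤ^k with x_{i+1} = x_i + 1, one has p·Ψ^ASEP_z(x⁺_i) + q·Ψ^ASEP_z(x⁻_{i+1}) - Ψ^ASEP_z(x) = 0, where p = τ/(1+τ), q = 1/(1+τ), x⁺_i increases x_i by 1, and x⁻_{i+1} decreases x_{i+1} by 1. -/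
open Finset

/-- One Bethe-ansatz summand. -/
private noncomputable def asepT (k : ℕ) (τ : ℝ) (z : Fin k → ℂ) (y : Fin k → ℤ)
    (π : Equiv.Perm (Fin k)) : ℂ :=
  (∏ p ∈ Finset.univ.filter (fun p : Fin k × Fin k => p.1 < p.2),
      (z (π p.1) - (τ : ℂ) * z (π p.2)) / (z (π p.1) - z (π p.2))) *
    ∏ l : Fin k, ((1 + z (π l)) / (1 + z (π l) / (τ : ℂ))) ^ (-(y l))

private lemma swap_pair_mem (k : ℕ) (i j : Fin k) (hij : (j : ℕ) = (i : ℕ) + 1)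
    (p : Fin k × Fin k)
    (hp : p ∈ (Finset.univ.filter (fun p : Fin k × Fin k => p.1 < p.2)).erase (i, j)) :
    (Equiv.swap i j p.1, Equiv.swap i j p.2) ∈
      (Finset.univ.filter (fun p : Fin k × Fin k => p.1 < p.2)).erase (i, j) := by
  simp only [Finset.mem_erase, Finset.mem_filter, Finset.mem_univ, true_and] at hp ⊢
  obtain ⟨hne, hlt⟩ := hp
  have hlt' : (p.1 : ℕ) < (p.2 : ℕ) := hlt
  have hijne : i ≠ j := by
    intro h; rw [h] at hij; omega
  rcases eq_or_ne p.1 i with h1i | h1i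
  · have h2j : p.2 ≠ j := by
      intro h; exact hne (Prod.ext_iff.mpr ⟨h1i, h⟩)
    have h2i : p.2 ≠ i := by
      intro h; rw [h1i, h] at hlt'; omega
    have h2j' : (p.2 : ℕ) ≠ (j : ℕ) := fun h => h2j (Fin.ext h)
    rw [h1i, Equiv.swap_apply_left, Equiv.swap_apply_of_ne_of_ne h2i h2j]
    constructor
    · intro h
      have := congrArg Prod.fst h
      simp only at this
      exact hijne (Fin.ext (by rw [this]))
    · show (j : ℕ) < (p.2 : ℕ)
      rw [h1i] at hlt'; omega
  · rcases eq_or_ne p.1 j with h1j | h1j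
    · have h2i : p.2 ≠ i := by
        intro h
        rw [h1j, h] at hlt'; omega
      have h2j : p.2 ≠ j := by
        intro h; rw [h1j, h] at hlt'; omega
      rw [h1j, Equiv.swap_apply_right, Equiv.swap_apply_of_ne_of_ne h2i h2j]
      have h2j' : (p.2 : ℕ) ≠ (j : ℕ) := fun h => h2j (Fin.ext h)
      constructor
      · intro h
        have := congrArg Prod.snd h
        simp only at this
        exact h2j this
      · show (i : ℕ) < (p.2 : ℕ)
        rw [h1j] at hlt'; omega
    · rw [Equiv.swap_apply_of_ne_of_ne h1i h1j]
      rcases eq_or_ne p.2 i with h2i | h2i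
      · rw [h2i, Equiv.swap_apply_left]
        have h1i' : (p.1 : ℕ) ≠ (i : ℕ) := fun h => h1i (Fin.ext h)
        constructor
        · intro h
          have := congrArg Prod.fst h
          simp only at this
          exact h1i this
        · show (p.1 : ℕ) < (j : ℕ)
          rw [h2i] at hlt'; omega
      · rcases eq_or_ne p.2 j with h2j | h2j
        · rw [h2j, Equiv.swap_apply_right]
          have h1i' : (p.1 : ℕ) ≠ (i : ℕ) := fun h => h1i (Fin.ext h)
          have h1j' : (p.1 : ℕ) ≠ (j : ℕ) := fun h => h1j (Fin.ext h)
          constructor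
          · intro h
            have := congrArg Prod.snd h
            simp only at this
            exact hijne (Fin.ext (by rw [this]))
          · show (p.1 : ℕ) < (i : ℕ)
            rw [h2j] at hlt'; omega
        · rw [Equiv.swap_apply_of_ne_of_ne h2i h2j]
          exact ⟨hne, hlt⟩

set_option maxHeartbeats 1000000 in
private lemma asep_key (τ a b : ℂ) (hτ : τ ≠ 0) (hτ1 : (1 : ℂ) + τ ≠ 0)
    (hab : a - b ≠ 0) (ha1 : (1 : ℂ) + a ≠ 0) (hb1 : (1 : ℂ) + b ≠ 0)
    (haτ : (1 : ℂ) + a / τ ≠ 0) (hbτ : (1 : ℂ) + b / τ ≠ 0) :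
    (a - τ * b) / (a - b) *
        (τ / (1 + τ) * ((1 + a) / (1 + a / τ))⁻¹ * ((1 + b) / (1 + b / τ))⁻¹
          + 1 / (1 + τ) - ((1 + b) / (1 + b / τ))⁻¹) +
      (b - τ * a) / (b - a) *
        (τ / (1 + τ) * ((1 + a) / (1 + a / τ))⁻¹ * ((1 + b) / (1 + b / τ))⁻¹
          + 1 / (1 + τ) - ((1 + a) / (1 + a / τ))⁻¹) = 0 := by
  have hba : b - a ≠ 0 := fun h => hab (by linear_combination -h)
  have hτa : τ + a ≠ 0 := fun h => haτ (by field_simp; linear_combination h)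
  have hτb : τ + b ≠ 0 := fun h => hbτ (by field_simp; linear_combination h)
  have hu : ((1 + a) / (1 + a / τ))⁻¹ = (τ + a) / (τ * (1 + a)) := by
    rw [inv_div, show (1 : ℂ) + a / τ = (τ + a) / τ by field_simp]
    rw [div_div]
  have hv : ((1 + b) / (1 + b / τ))⁻¹ = (τ + b) / (τ * (1 + b)) := by
    rw [inv_div, show (1 : ℂ) + b / τ = (τ + b) / τ by field_simp]
    rw [div_div]
  rw [hu, hv]
  have hD : (τ : ℂ) * (1 + a) * (1 + b) * (1 + τ) ≠ 0 :=
    mul_ne_zero (mul_ne_zero (mul_ne_zero hτ ha1) hb1) hτ1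
  have hDD : ((1 : ℂ) + τ) * (τ * (1 + a)) * (τ * (1 + b)) * (1 + τ) ≠ 0 :=
    mul_ne_zero (mul_ne_zero (mul_ne_zero hτ1 (mul_ne_zero hτ ha1)) (mul_ne_zero hτ hb1)) hτ1
  have hB1 : τ / (1 + τ) * ((τ + a) / (τ * (1 + a))) * ((τ + b) / (τ * (1 + b)))
          + 1 / (1 + τ) - (τ + b) / (τ * (1 + b))
      = ((1 - τ) * (a * τ - b)) / (τ * (1 + a) * (1 + b) * (1 + τ)) := by
    clear hab hba hτa hτb haτ hbτ hu hv
    field_simp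
    ring
  have hB2 : τ / (1 + τ) * ((τ + a) / (τ * (1 + a))) * ((τ + b) / (τ * (1 + b)))
          + 1 / (1 + τ) - (τ + a) / (τ * (1 + a))
      = ((1 - τ) * (b * τ - a)) / (τ * (1 + a) * (1 + b) * (1 + τ)) := by
    clear hab hba hτa hτb haτ hbτ hu hv
    field_simp
    ring
  rw [hB1, hB2, div_mul_div_comm, div_mul_div_comm,
    div_add_div _ _ (mul_ne_zero hab hD) (mul_ne_zero hba hD), div_eq_zero_iff]
  left
  ring

private lemma asepT_decomp (k : ℕ) (τ : ℝ) (z : Fin k → ℂ) (y : Fin k → ℤ)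
    (π : Equiv.Perm (Fin k)) (i j : Fin k) (hlt : i < j) :
    asepT k τ z y π =
      ((z (π i) - (τ : ℂ) * z (π j)) / (z (π i) - z (π j)) *
        ∏ p ∈ (Finset.univ.filter (fun p : Fin k × Fin k => p.1 < p.2)).erase (i, j),
          (z (π p.1) - (τ : ℂ) * z (π p.2)) / (z (π p.1) - z (π p.2))) *
      (((1 + z (π i)) / (1 + z (π i) / (τ : ℂ))) ^ (-(y i)) *
       (((1 + z (π j)) / (1 + z (π j) / (τ : ℂ))) ^ (-(y j)) *
        ∏ l ∈ (Finset.univ.erase i).erase j,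
          ((1 + z (π l)) / (1 + z (π l) / (τ : ℂ))) ^ (-(y l)))) := by
  have hijne : i ≠ j := ne_of_lt hlt
  have hmem : (i, j) ∈ Finset.univ.filter (fun p : Fin k × Fin k => p.1 < p.2) := by
    simp [hlt]
  have hjmem : j ∈ Finset.univ.erase i := by
    simp [hijne.symm]
  rw [asepT, ← Finset.mul_prod_erase _ _ hmem,
    ← Finset.mul_prod_erase Finset.univ _ (Finset.mem_univ i),
    ← Finset.mul_prod_erase _ _ hjmem]

private lemma asep_pair (k : ℕ) (τ : ℝ) (hτ0 : 0 < τ)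
    (z : Fin k → ℂ) (hinj : Function.Injective z)
    (hz1 : ∀ j, z j ≠ -1) (hzτ : ∀ j, z j ≠ -(τ : ℂ))
    (x : Fin k → ℤ) (i j : Fin k) (hij : (j : ℕ) = (i : ℕ) + 1)
    (hx : x j = x i + 1) (σ : Equiv.Perm (Fin k)) :
    (((τ / (1 + τ) : ℝ) : ℂ) * asepT k τ z (Function.update x i (x i + 1)) σ +
        ((1 / (1 + τ) : ℝ) : ℂ) * asepT k τ z (Function.update x j (x j - 1)) σ -
        asepT k τ z x σ) +
      (((τ / (1 + τ) : ℝ) : ℂ) * asepT k τ z (Function.update x i (x i + 1)) (σ * Equiv.swap i j) +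
        ((1 / (1 + τ) : ℝ) : ℂ) * asepT k τ z (Function.update x j (x j - 1)) (σ * Equiv.swap i j) -
        asepT k τ z x (σ * Equiv.swap i j)) = 0 := by
  classical
  have hijne : i ≠ j := fun h => by rw [h] at hij; omega
  have hlt : i < j := by rw [Fin.lt_def]; omega
  have hτC : (τ : ℂ) ≠ 0 := Complex.ofReal_ne_zero.mpr hτ0.ne'
  have hτ1C : (1 : ℂ) + τ ≠ 0 := by
    have h : ((1 + τ : ℝ) : ℂ) ≠ 0 := Complex.ofReal_ne_zero.mpr (by positivity)
    simpa using h
  have hz1' : ∀ l, (1 : ℂ) + z l ≠ 0 := fun l h => hz1 l (by linear_combination h)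
  have hzτ' : ∀ l, (1 : ℂ) + z l / τ ≠ 0 := by
    intro l h
    apply hzτ l
    have h2 : (τ : ℂ) * (1 + z l / τ) = 0 := by rw [h, mul_zero]
    rw [mul_add, mul_one, mul_div_cancel₀ _ hτC] at h2
    linear_combination h2
  have hne : z (σ i) - z (σ j) ≠ 0 := by
    intro h
    exact hijne (σ.injective (hinj (by linear_combination h)))
  have hval : ∀ l, ((1 : ℂ) + z l) / (1 + z l / τ) ≠ 0 :=
    fun l => div_ne_zero (hz1' l) (hzτ' l)
  have hsi : (σ * Equiv.swap i j) i = σ j := by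
    simp [Equiv.Perm.mul_apply]
  have hsj : (σ * Equiv.swap i j) j = σ i := by
    simp [Equiv.Perm.mul_apply]
  -- decompose each of the six asepT terms
  rw [asepT_decomp k τ z (Function.update x i (x i + 1)) σ i j hlt,
    asepT_decomp k τ z (Function.update x j (x j - 1)) σ i j hlt,
    asepT_decomp k τ z x σ i j hlt,
    asepT_decomp k τ z (Function.update x i (x i + 1)) (σ * Equiv.swap i j) i j hlt,
    asepT_decomp k τ z (Function.update x j (x j - 1)) (σ * Equiv.swap i j) i j hlt,
    asepT_decomp k τ z x (σ * Equiv.swap i j) i j hlt]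
  -- the pair-product over the erased set is swap invariant
  have hrestF :
      ∏ p ∈ (Finset.univ.filter (fun p : Fin k × Fin k => p.1 < p.2)).erase (i, j),
          (z ((σ * Equiv.swap i j) p.1) - (τ : ℂ) * z ((σ * Equiv.swap i j) p.2)) /
            (z ((σ * Equiv.swap i j) p.1) - z ((σ * Equiv.swap i j) p.2)) =
      ∏ p ∈ (Finset.univ.filter (fun p : Fin k × Fin k => p.1 < p.2)).erase (i, j),
          (z (σ p.1) - (τ : ℂ) * z (σ p.2)) / (z (σ p.1) - z (σ p.2)) := by
    refine Finset.prod_nbij' (fun p => (Equiv.swap i j p.1, Equiv.swap i j p.2))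
      (fun p => (Equiv.swap i j p.1, Equiv.swap i j p.2))
      (swap_pair_mem k i j hij) (swap_pair_mem k i j hij)
      (fun p _ => by simp) (fun p _ => by simp) (fun p _ => by simp [Equiv.Perm.mul_apply])
  rw [hrestF]
  -- the remaining one-body product is common to all six terms
  have hQ : ∀ (π : Equiv.Perm (Fin k)) (y : Fin k → ℤ),
      (∀ l, l ≠ i → l ≠ j → π l = σ l ∧ y l = x l) →
      ∏ l ∈ (Finset.univ.erase i).erase j,
          ((1 + z (π l)) / (1 + z (π l) / (τ : ℂ))) ^ (-(y l)) =
      ∏ l ∈ (Finset.univ.erase i).erase j,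
          ((1 + z (σ l)) / (1 + z (σ l) / (τ : ℂ))) ^ (-(x l)) := by
    intro π y h
    refine Finset.prod_congr rfl fun l hl => ?_
    simp only [Finset.mem_erase, Finset.mem_univ] at hl
    obtain ⟨h1, h2⟩ := h l hl.2.1 hl.1
    rw [h1, h2]
  rw [hQ σ (Function.update x i (x i + 1))
      (fun l h1 h2 => ⟨rfl, Function.update_of_ne h1 _ x⟩),
    hQ σ (Function.update x j (x j - 1))
      (fun l h1 h2 => ⟨rfl, Function.update_of_ne h2 _ x⟩),
    hQ (σ * Equiv.swap i j) (Function.update x i (x i + 1))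
      (fun l h1 h2 => ⟨by simp [Equiv.Perm.mul_apply, Equiv.swap_apply_of_ne_of_ne h1 h2],
        Function.update_of_ne h1 _ x⟩),
    hQ (σ * Equiv.swap i j) (Function.update x j (x j - 1))
      (fun l h1 h2 => ⟨by simp [Equiv.Perm.mul_apply, Equiv.swap_apply_of_ne_of_ne h1 h2],
        Function.update_of_ne h2 _ x⟩),
    hQ (σ * Equiv.swap i j) x
      (fun l h1 h2 => ⟨by simp [Equiv.Perm.mul_apply, Equiv.swap_apply_of_ne_of_ne h1 h2], rfl⟩)]
  -- values at the special positions
  rw [hsi, hsj]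
  -- exponents at the special positions
  rw [Function.update_self, Function.update_self,
    Function.update_of_ne hijne.symm, Function.update_of_ne hijne, hx,
    show x i + 1 - 1 = x i from by ring]
  -- split the shifted powers
  have hsplit : ∀ w : ℂ, w ≠ 0 → w ^ (-(x i + 1)) = w ^ (-(x i)) * w⁻¹ := fun w hw => by
    rw [show -(x i + 1) = -(x i) + (-1) from by ring, zpow_add₀ hw, zpow_neg_one]
  rw [hsplit _ (hval (σ i)), hsplit _ (hval (σ j))]
  push_cast
  linear_combination
    ((∏ p ∈ (Finset.univ.filter (fun p : Fin k × Fin k => p.1 < p.2)).erase (i, j),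
        (z (σ p.1) - (τ : ℂ) * z (σ p.2)) / (z (σ p.1) - z (σ p.2))) *
      (∏ l ∈ (Finset.univ.erase i).erase j,
        ((1 + z (σ l)) / (1 + z (σ l) / (τ : ℂ))) ^ (-(x l))) *
      (((1 + z (σ i)) / (1 + z (σ i) / (τ : ℂ))) ^ (-(x i))) *
      (((1 + z (σ j)) / (1 + z (σ j) / (τ : ℂ))) ^ (-(x i)))) *
    asep_key (τ : ℂ) (z (σ i)) (z (σ j)) hτC hτ1C hne (hz1' (σ i)) (hz1' (σ j))
      (hzτ' (σ i)) (hzτ' (σ j))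

/-- The ASEP Bethe-ansatz eigenfunction `Ψ^ASEP_z(x)`, as a function on `ℤ^k`. -/
noncomputable def PsiASEP (k : ℕ) (τ : ℝ) (z : Fin k → ℂ) (x : Fin k → ℤ) : ℂ :=
  ∑ σ : Equiv.Perm (Fin k),
    (∏ p ∈ Finset.univ.filter (fun p : Fin k × Fin k => p.1 < p.2),
      (z (σ p.1) - (τ : ℂ) * z (σ p.2)) / (z (σ p.1) - z (σ p.2))) *
    ∏ j : Fin k, ((1 + z (σ j)) / (1 + z (σ j) / (τ : ℂ))) ^ (-(x j))

/-- The ASEP eigenfunction satisfies the two-body boundary conditions: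
if `x_{i+1} = x_i + 1` then `p Ψ(x⁺_i) + q Ψ(x⁻_{i+1}) - Ψ(x) = 0` with
`p = τ/(1+τ)`, `q = 1/(1+τ)`. -/
theorem stmt13 (k : ℕ) (τ : ℝ) (hτ0 : 0 < τ) (hτ1 : τ < 1)
    (z : Fin k → ℂ) (hinj : Function.Injective z)
    (hz1 : ∀ j, z j ≠ -1) (hzτ : ∀ j, z j ≠ -(τ : ℂ))
    (x : Fin k → ℤ) (i j : Fin k) (hij : (j : ℕ) = (i : ℕ) + 1)
    (hx : x j = x i + 1) :
    ((τ / (1 + τ) : ℝ) : ℂ) * PsiASEP k τ z (Function.update x i (x i + 1)) +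
      ((1 / (1 + τ) : ℝ) : ℂ) * PsiASEP k τ z (Function.update x j (x j - 1)) -
      PsiASEP k τ z x = 0 := by
  classical
  have hijne : i ≠ j := fun h => by rw [h] at hij; omega
  have hpsi : ∀ y, PsiASEP k τ z y = ∑ σ : Equiv.Perm (Fin k), asepT k τ z y σ :=
    fun y => rfl
  rw [hpsi, hpsi, hpsi, Finset.mul_sum, Finset.mul_sum, ← Finset.sum_add_distrib,
    ← Finset.sum_sub_distrib]
  exact Finset.sum_ninvolution (fun σ => σ * Equiv.swap i j)
    (fun σ => asep_pair k τ hτ0 z hinj hz1 hzτ x i j hij hx σ)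
    (fun σ _ h => hijne ((Equiv.mul_swap_eq_iff).mp h))
    (fun σ => Finset.mem_univ _)
    (fun σ => by show σ * Equiv.swap i j * Equiv.swap i j = σ; rw [mul_assoc, Equiv.swap_mul_self, mul_one])
end

section
/- The ASEP eigenfunction is an eigenfunction of the free ASEP generator: for Ψ^ASEP_z as defined, and the free operator (L u)(x) = ∑_{i=1}^k [p·u(x + e_i) + q·u(x - e_i) - u(x)] acting on functions on ℤ^k (p = τ/(1+τ), q = 1/(1+τ)), one has L Ψ^ASEP_z = λ(z)·Ψ^ASEP_z with eigenvalue λ(z) = -((1-τ)²/(1+τ)) ∑_{j=1}^k 1/((1 + z_j)(1 + τ/z_j)). -/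
open Finset

lemma key_one (τ : ℝ) (hτ0 : 0 < τ) (hτ1 : τ < 1) (w : ℂ)
    (h1 : w ≠ -1) (h2 : w ≠ -(τ:ℂ)) (h0 : w ≠ 0) (n : ℤ) :
    ((τ / (1 + τ) : ℝ) : ℂ) * ((1 + w) / (1 + w / (τ:ℂ))) ^ (-(n + 1)) +
      ((1 / (1 + τ) : ℝ) : ℂ) * ((1 + w) / (1 + w / (τ:ℂ))) ^ (-(n - 1)) -
      ((1 + w) / (1 + w / (τ:ℂ))) ^ (-n)
    = (-(((1 - τ) ^ 2 / (1 + τ) : ℝ) : ℂ) * (1 / ((1 + w) * (1 + (τ:ℂ) / w)))) *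
      ((1 + w) / (1 + w / (τ:ℂ))) ^ (-n) := by
  have hτne : (τ:ℂ) ≠ 0 := by exact_mod_cast hτ0.ne'
  have hτ1c : (1:ℂ) + τ ≠ 0 := by
    intro h
    have h' : (τ:ℂ) = ((-1 : ℝ) : ℂ) := by push_cast; linear_combination h
    have : τ = -1 := by exact_mod_cast h'
    linarith
  have hw1 : (1:ℂ) + w ≠ 0 := fun h => h1 (by linear_combination h)
  have hwτ : (1:ℂ) + w / τ ≠ 0 := by
    intro h
    apply h2
    field_simp at h
    linear_combination h
  have hτw : (1:ℂ) + (τ:ℂ) / w ≠ 0 := by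
    intro h
    apply h2
    field_simp at h
    linear_combination h
  set f := (1 + w) / (1 + w / (τ:ℂ)) with hfdef
  have hf : f ≠ 0 := div_ne_zero hw1 hwτ
  have hscal : ((τ / (1 + τ) : ℝ) : ℂ) * f⁻¹ + ((1 / (1 + τ) : ℝ) : ℂ) * f - 1
      = -(((1 - τ) ^ 2 / (1 + τ) : ℝ) : ℂ) * (1 / ((1 + w) * (1 + (τ:ℂ) / w))) := by
    have hsum : (τ:ℂ) + w ≠ 0 := fun h => h2 (by linear_combination h)
    have r1 : (1:ℂ) + w / τ = (τ + w) / τ := by field_simp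
    have r2 : (1:ℂ) + (τ:ℂ) / w = (w + τ) / w := by field_simp
    have hsum' : w + (τ:ℂ) ≠ 0 := fun h => hsum (by linear_combination h)
    push_cast
    rw [hfdef, r1, r2]
    field_simp
    ring
  have e1 : -(n + 1) = -n - 1 := by ring
  have e2 : -(n - 1) = -n + 1 := by ring
  rw [e1, e2, zpow_sub_one₀ hf, zpow_add_one₀ hf]
  linear_combination (f ^ (-n)) * hscal

/-- The ASEP eigenfunction is an eigenfunction of the free ASEP generator
`(L u)(x) = ∑_i [p u(x+e_i) + q u(x-e_i) - u(x)]` with eigenvalue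
`-((1-τ)²/(1+τ)) ∑_j 1/((1+z_j)(1+τ/z_j))`. -/
theorem stmt14 (k : ℕ) (τ : ℝ) (hτ0 : 0 < τ) (hτ1 : τ < 1)
    (z : Fin k → ℂ) (hinj : Function.Injective z)
    (hz1 : ∀ j, z j ≠ -1) (hzτ : ∀ j, z j ≠ -(τ : ℂ)) (hz0 : ∀ j, z j ≠ 0)
    (x : Fin k → ℤ) :
    ∑ i : Fin k,
      (((τ / (1 + τ) : ℝ) : ℂ) * PsiASEP k τ z (Function.update x i (x i + 1)) +
        ((1 / (1 + τ) : ℝ) : ℂ) * PsiASEP k τ z (Function.update x i (x i - 1)) -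
        PsiASEP k τ z x)
    = (-(((1 - τ) ^ 2 / (1 + τ) : ℝ) : ℂ) *
        ∑ j : Fin k, 1 / ((1 + z j) * (1 + (τ : ℂ) / z j))) *
      PsiASEP k τ z x := by
  simp only [PsiASEP, Finset.mul_sum, ← Finset.sum_sub_distrib, ← Finset.sum_add_distrib]
  rw [Finset.sum_comm]
  refine Finset.sum_congr rfl fun σ _ => ?_
  set C := ∏ p ∈ Finset.univ.filter (fun p : Fin k × Fin k => p.1 < p.2),
      (z (σ p.1) - (τ : ℂ) * z (σ p.2)) / (z (σ p.1) - z (σ p.2)) with hC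
  set F : Fin k → ℤ → ℂ := fun j n => ((1 + z (σ j)) / (1 + z (σ j) / (τ : ℂ))) ^ (-n) with hF
  have hup : ∀ (i : Fin k) (v : ℤ),
      (∏ j : Fin k, F j (Function.update x i v j))
        = F i v * ∏ j ∈ Finset.univ.erase i, F j (x j) := by
    intro i v
    rw [← Finset.mul_prod_erase Finset.univ _ (Finset.mem_univ i), Function.update_self]
    congr 1
    exact Finset.prod_congr rfl fun j hj =>
      by rw [Function.update_of_ne (Finset.mem_erase.mp hj).1]
  have hfull : ∀ i : Fin k, (∏ j : Fin k, F j (x j))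
        = F i (x i) * ∏ j ∈ Finset.univ.erase i, F j (x j) :=
    fun i => (Finset.mul_prod_erase Finset.univ _ (Finset.mem_univ i)).symm
  have step : ∀ i : Fin k,
      ((τ / (1 + τ) : ℝ) : ℂ) * (C * ∏ j : Fin k, F j (Function.update x i (x i + 1) j)) +
        ((1 / (1 + τ) : ℝ) : ℂ) * (C * ∏ j : Fin k, F j (Function.update x i (x i - 1) j)) -
        C * ∏ j : Fin k, F j (x j)
      = (-(((1 - τ) ^ 2 / (1 + τ) : ℝ) : ℂ) *
          (1 / ((1 + z (σ i)) * (1 + (τ : ℂ) / z (σ i))))) *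
        (C * ∏ j : Fin k, F j (x j)) := by
    intro i
    rw [hup i (x i + 1), hup i (x i - 1), hfull i]
    have hk := key_one τ hτ0 hτ1 (z (σ i)) (hz1 (σ i)) (hzτ (σ i)) (hz0 (σ i)) (x i)
    simp only [hF]
    linear_combination (C * ∏ j ∈ Finset.univ.erase i, F j (x j)) * hk
  rw [Finset.sum_congr rfl fun i _ => step i, ← Finset.sum_mul]
  congr 1
  · exact Equiv.sum_comp σ (fun j => -(((1 - τ) ^ 2 / (1 + τ) : ℝ) : ℂ) *
    (1 / ((1 + z j) * (1 + (τ : ℂ) / z j))))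
end

section
/- The q-Hahn two-body boundary operator acts diagonally on products of one-particle eigenfunctions: with f_z(n) = ((1-z)/(1-νz))^{-n} and the operator (B u)(n_1, n_2) = ν(1-q) u(n_1 - 1, n_2 - 1) + (q-ν) u(n_1, n_2 - 1) + (1-q) u(n_1, n_2) - (1-qν) u(n_1 - 1, n_2), one has B(f_{z_1} ⊗ f_{z_2})(n_1, n_2) = ((1-ν)²/((1-νz_1)(1-νz_2))) · (z_1 - q z_2) · f_{z_1}(n_1) f_{z_2}(n_2) for all n_1, n_2 ∈ ℤ. In particular, the function u(n_1,n_2) = (z_1 - q z_2) f_{z_2}(n_1) f_{z_1}(n_2) - (z_2 - q z_1) f_{z_1}(n_1) f_{z_2}(n_2) satisfies (B u)(n,n) = 0 for all n ∈ ℤ. -/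
/-- One-particle q-Hahn eigenfunction `f_z(n) = ((1-z)/(1-νz))^{-n}`. -/
noncomputable def fq (ν z : ℂ) (n : ℤ) : ℂ := ((1 - z) / (1 - ν * z)) ^ (-n)

lemma fq_sub_one (ν z : ℂ) (hz : z ≠ 1) (hz' : ν * z ≠ 1) (n : ℤ) :
    fq ν z (n - 1) = (1 - z) / (1 - ν * z) * fq ν z n := by
  have hnum : (1 : ℂ) - z ≠ 0 := sub_ne_zero.mpr (Ne.symm hz)
  have hden : (1 : ℂ) - ν * z ≠ 0 := sub_ne_zero.mpr (Ne.symm hz')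
  have hr : (1 - z) / (1 - ν * z) ≠ 0 := div_ne_zero hnum hden
  have : -(n - 1) = -n + 1 := by ring
  rw [fq, fq, this, zpow_add₀ hr, zpow_one, mul_comm]

/-- The q-Hahn two-body boundary operator
`(B u)(n₁,n₂) = ν(1-q)u(n₁-1,n₂-1) + (q-ν)u(n₁,n₂-1) + (1-q)u(n₁,n₂) - (1-qν)u(n₁-1,n₂)`
acts diagonally on products of one-particle eigenfunctions; consequently the
antisymmetrized combination satisfies `(B u)(n,n) = 0`. -/
theorem stmt16 (q ν z1 z2 : ℂ) (hν : ν ≠ 1)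
    (h1 : z1 ≠ 1) (h2 : z2 ≠ 1) (h1' : ν * z1 ≠ 1) (h2' : ν * z2 ≠ 1) :
    (∀ n1 n2 : ℤ,
      ν * (1 - q) * (fq ν z1 (n1 - 1) * fq ν z2 (n2 - 1)) +
        (q - ν) * (fq ν z1 n1 * fq ν z2 (n2 - 1)) +
        (1 - q) * (fq ν z1 n1 * fq ν z2 n2) -
        (1 - q * ν) * (fq ν z1 (n1 - 1) * fq ν z2 n2)
      = (1 - ν) ^ 2 / ((1 - ν * z1) * (1 - ν * z2)) * (z1 - q * z2) *
          (fq ν z1 n1 * fq ν z2 n2)) ∧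
    (∀ n : ℤ,
      (fun u : ℤ → ℤ → ℂ =>
          ν * (1 - q) * u (n - 1) (n - 1) + (q - ν) * u n (n - 1) +
            (1 - q) * u n n - (1 - q * ν) * u (n - 1) n)
        (fun m1 m2 =>
          (z1 - q * z2) * fq ν z2 m1 * fq ν z1 m2 -
            (z2 - q * z1) * fq ν z1 m1 * fq ν z2 m2) = 0) := by
  have hd1 : (1 : ℂ) - ν * z1 ≠ 0 := sub_ne_zero.mpr (Ne.symm h1')
  have hd2 : (1 : ℂ) - ν * z2 ≠ 0 := sub_ne_zero.mpr (Ne.symm h2')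
  have key : ∀ n1 n2 : ℤ,
      ν * (1 - q) * (fq ν z1 (n1 - 1) * fq ν z2 (n2 - 1)) +
        (q - ν) * (fq ν z1 n1 * fq ν z2 (n2 - 1)) +
        (1 - q) * (fq ν z1 n1 * fq ν z2 n2) -
        (1 - q * ν) * (fq ν z1 (n1 - 1) * fq ν z2 n2)
      = (1 - ν) ^ 2 / ((1 - ν * z1) * (1 - ν * z2)) * (z1 - q * z2) *
          (fq ν z1 n1 * fq ν z2 n2) := by
    intro n1 n2
    rw [fq_sub_one ν z1 h1 h1' n1, fq_sub_one ν z2 h2 h2' n2]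
    field_simp
    ring
  have key2 : ∀ n1 n2 : ℤ,
      ν * (1 - q) * (fq ν z2 (n1 - 1) * fq ν z1 (n2 - 1)) +
        (q - ν) * (fq ν z2 n1 * fq ν z1 (n2 - 1)) +
        (1 - q) * (fq ν z2 n1 * fq ν z1 n2) -
        (1 - q * ν) * (fq ν z2 (n1 - 1) * fq ν z1 n2)
      = (1 - ν) ^ 2 / ((1 - ν * z2) * (1 - ν * z1)) * (z2 - q * z1) *
          (fq ν z2 n1 * fq ν z1 n2) := by
    intro n1 n2
    rw [fq_sub_one ν z1 h1 h1' n2, fq_sub_one ν z2 h2 h2' n1]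
    field_simp
    ring
  refine ⟨key, fun n => ?_⟩
  simp only
  have A := key n n
  have B := key2 n n
  linear_combination (z1 - q * z2) * B - (z2 - q * z1) * A
end

section
/- Limit of q-Boson eigenfunctions to Hall–Littlewood (Van Diejen) eigenfunctions: for fixed n ∈ W^k (n_1 ≥ … ≥ n_k, integers) and fixed pairwise distinct w_1,…,w_k ∈ ℂ∖{0}, one has lim_{ε→0} (-ε)^{-(n_1+…+n_k)} Ψ^{q-Boson}_{(w_1/ε,…,w_k/ε)}(n) = ∑_{σ∈S(k)} ∏_{B<A} (w_{σ(A)} - q w_{σ(B)})/(w_{σ(A)} - w_{σ(B)}) ∏_{j=1}^k w_{σ(j)}^{-n_j}, where Ψ^{q-Boson}_z(n) = ∑_{σ∈S(k)} ∏_{B<A} (z_{σ(A)} - q z_{σ(B)})/(z_{σ(A)} - z_{σ(B)}) ∏_{j=1}^k (1 - z_{σ(j)})^{-n_j}. -/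
open Finset Filter

/-- The q-Boson Bethe-ansatz eigenfunction. -/
noncomputable def PsiQBoson (k : ℕ) (q : ℂ) (z : Fin k → ℂ) (n : Fin k → ℤ) : ℂ :=
  ∑ σ : Equiv.Perm (Fin k),
    (∏ p ∈ Finset.univ.filter (fun p : Fin k × Fin k => p.1 < p.2),
      (z (σ p.2) - q * z (σ p.1)) / (z (σ p.2) - z (σ p.1))) *
    ∏ j : Fin k, (1 - z (σ j)) ^ (-(n j))

lemma zpow_sum_aux {ι : Type*} {a : ℂ} (ha : a ≠ 0) (s : Finset ι) (f : ι → ℤ) :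
    a ^ (∑ i ∈ s, f i) = ∏ i ∈ s, a ^ f i := by
  classical
  induction s using Finset.cons_induction with
  | empty => simp
  | cons i s hi ih => rw [Finset.sum_cons, Finset.prod_cons, zpow_add₀ ha, ih]

lemma neg_one_zpow_neg (S : ℤ) : (-1 : ℂ) ^ (-S) = (-1 : ℂ) ^ S := by
  rw [zpow_neg, ← inv_zpow, inv_neg, inv_one]

/-- Limit of q-Boson eigenfunctions to Hall–Littlewood (Van Diejen)
eigenfunctions: `(-ε)^{-(n_1+…+n_k)} Ψ^{q-Boson}_{w/ε}(n)` converges, as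
`ε → 0⁺`, to the Hall–Littlewood-type eigenfunction in the variables `w`. -/
theorem stmt19 (k : ℕ) (q : ℂ)
    (n : Fin k → ℤ) (hn : ∀ i j : Fin k, i ≤ j → n j ≤ n i)
    (w : Fin k → ℂ) (hw0 : ∀ j, w j ≠ 0) (hinj : Function.Injective w) :
    Tendsto (fun ε : ℝ =>
        (-(ε : ℂ)) ^ (-∑ j : Fin k, n j) *
          PsiQBoson k q (fun j => w j / (ε : ℂ)) n)
      (nhdsWithin 0 (Set.Ioi 0))
      (nhds (∑ σ : Equiv.Perm (Fin k),
        (∏ p ∈ Finset.univ.filter (fun p : Fin k × Fin k => p.1 < p.2),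
          (w (σ p.2) - q * w (σ p.1)) / (w (σ p.2) - w (σ p.1))) *
        ∏ j : Fin k, (w (σ j)) ^ (-(n j)))) := by
  classical
  set S : ℤ := ∑ j : Fin k, n j with hS
  set P : Equiv.Perm (Fin k) → ℂ := fun σ =>
    ∏ p ∈ Finset.univ.filter (fun p : Fin k × Fin k => p.1 < p.2),
      (w (σ p.2) - q * w (σ p.1)) / (w (σ p.2) - w (σ p.1)) with hP
  have key : Tendsto (fun ε : ℝ =>
      ∑ σ : Equiv.Perm (Fin k),
        P σ * ((-1 : ℂ) ^ S * ∏ j : Fin k, ((ε : ℂ) - w (σ j)) ^ (-(n j))))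
      (nhdsWithin 0 (Set.Ioi 0))
      (nhds (∑ σ : Equiv.Perm (Fin k),
        P σ * ∏ j : Fin k, (w (σ j)) ^ (-(n j)))) := by
    apply tendsto_finset_sum
    intro σ _
    have hprod : Tendsto (fun ε : ℝ => ∏ j : Fin k, ((ε : ℂ) - w (σ j)) ^ (-(n j)))
        (nhdsWithin 0 (Set.Ioi 0)) (nhds (∏ j : Fin k, (-(w (σ j))) ^ (-(n j)))) := by
      apply tendsto_finset_prod
      intro j _
      have hbase : Tendsto (fun ε : ℝ => (ε : ℂ) - w (σ j))
          (nhdsWithin 0 (Set.Ioi 0)) (nhds (-(w (σ j)))) := by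
        have h0 : Tendsto (fun ε : ℝ => (ε : ℂ)) (nhdsWithin 0 (Set.Ioi 0)) (nhds 0) := by
          simpa using (Complex.continuous_ofReal.tendsto 0).mono_left nhdsWithin_le_nhds
        simpa using h0.sub tendsto_const_nhds
      exact hbase.zpow₀ _ (Or.inl (neg_ne_zero.mpr (hw0 _)))
    have hval : (-1 : ℂ) ^ S * ∏ j : Fin k, (-(w (σ j))) ^ (-(n j))
        = ∏ j : Fin k, (w (σ j)) ^ (-(n j)) := by
      have : ∀ j : Fin k, (-(w (σ j))) ^ (-(n j))
          = (-1 : ℂ) ^ (-(n j)) * (w (σ j)) ^ (-(n j)) := by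
        intro j
        rw [← neg_one_mul, mul_zpow]
      rw [Finset.prod_congr rfl fun j _ => this j, Finset.prod_mul_distrib,
        ← zpow_sum_aux (by norm_num : (-1 : ℂ) ≠ 0), Finset.sum_neg_distrib,
        neg_one_zpow_neg, ← mul_assoc, ← mul_zpow, neg_mul_neg, one_mul, one_zpow, one_mul]
    have := (tendsto_const_nhds (x := P σ)).mul
      ((tendsto_const_nhds (x := ((-1 : ℂ) ^ S))).mul hprod)
    rw [hval] at this
    exact this
  refine Tendsto.congr' ?_ key
  filter_upwards [self_mem_nhdsWithin] with ε hε
  have hε0 : (ε : ℂ) ≠ 0 := by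
    simpa using ne_of_gt (Set.mem_Ioi.mp hε)
  simp only [PsiQBoson, Finset.mul_sum]
  apply Finset.sum_congr rfl
  intro σ _
  have hpref : (∏ p ∈ Finset.univ.filter (fun p : Fin k × Fin k => p.1 < p.2),
      (w (σ p.2) / (ε : ℂ) - q * (w (σ p.1) / (ε : ℂ))) /
        (w (σ p.2) / (ε : ℂ) - w (σ p.1) / (ε : ℂ))) = P σ := by
    apply Finset.prod_congr rfl
    intro p hp
    have hlt : p.1 < p.2 := (Finset.mem_filter.mp hp).2
    have hne : w (σ p.2) - w (σ p.1) ≠ 0 := by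
      refine sub_ne_zero.mpr fun h => ?_
      exact absurd (σ.injective (hinj h)) (ne_of_gt hlt)
    have e1 : w (σ p.2) / (ε : ℂ) - q * (w (σ p.1) / (ε : ℂ))
        = (w (σ p.2) - q * w (σ p.1)) / (ε : ℂ) := by ring
    have e2 : w (σ p.2) / (ε : ℂ) - w (σ p.1) / (ε : ℂ)
        = (w (σ p.2) - w (σ p.1)) / (ε : ℂ) := by ring
    rw [e1, e2, div_div_div_cancel_right₀]
    exact hε0
  have hmain : (∏ j : Fin k, ((1 : ℂ) - w (σ j) / (ε : ℂ)) ^ (-(n j)))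
      = (∏ j : Fin k, ((ε : ℂ) - w (σ j)) ^ (-(n j))) * (ε : ℂ) ^ S := by
    rw [hS, zpow_sum_aux hε0, ← Finset.prod_mul_distrib]
    apply Finset.prod_congr rfl
    intro j _
    have e3 : (1 : ℂ) - w (σ j) / (ε : ℂ) = ((ε : ℂ) - w (σ j)) / (ε : ℂ) := by
      rw [sub_div, div_self hε0]
    rw [e3, div_zpow, div_eq_mul_inv, ← zpow_neg, neg_neg]
  have hz : (ε : ℂ) ^ (-S) * (ε : ℂ) ^ S = 1 := by
    rw [← zpow_add₀ hε0]; simp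
  have hneg : (-(ε : ℂ)) ^ (-S) = (-1 : ℂ) ^ S * (ε : ℂ) ^ (-S) := by
    rw [← neg_one_mul, mul_zpow, neg_one_zpow_neg]
  rw [hpref, hmain, hneg]
  linear_combination (-(P σ * ((-1 : ℂ) ^ S *
    ∏ j : Fin k, ((ε : ℂ) - w (σ j)) ^ (-(n j))))) * hz
end
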